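/- arXiv:2112.14488 — 2 statements merged into one kernel-verified Lean document; each statement's English description precedes it below -/
import Mathlib

section
/- For every ε > 0 there exists t₀ such that for all t ≥ t₀: with probability at least 1 - ε, a uniformly random necklace with 2 beads of each of t types admits no fair two-player partition using fewer than (2H^{-1}(1/2) - ε)·t cuts, where H^{-1} is the inverse of the binary entropy function on [0, 1/2]. In particular X(2,t,1) ≥ 0.22·t with high probability as t → ∞. -/
open scoped Classical

set_option maxHeartbeats 1000000

noncomputable section

/-- The number of cuts needed to realize the two-player partition `P`. -/
def cutsOf {n : ℕ} (P : Fin n → Fin 2) : ℕ :=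
  (Finset.univ.filter (fun p : Fin n × Fin n =>
    (p.1 : ℕ) + 1 = (p.2 : ℕ) ∧ P p.1 ≠ P p.2)).card

/-- The set of necklaces of length `2t` with exactly `2` beads of each of `t` types. -/
def neck (t : ℕ) : Finset (Fin (2 * t) → Fin t) :=
  Finset.univ.filter (fun f =>
    ∀ i : Fin t, (Finset.univ.filter (fun p => f p = i)).card = 2)

/-- `P` is a fair two-player partition of the necklace `f`: each player gets exactly one
bead of each type. -/
def Fair2 (t : ℕ) (f : Fin (2 * t) → Fin t) (P : Fin (2 * t) → Fin 2) : Prop :=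
  ∀ j i, (Finset.univ.filter (fun p => P p = j ∧ f p = i)).card = 1

/-- Necklaces all of whose fair two-player partitions need at least `r` cuts. -/
def hardNeck (t : ℕ) (r : ℝ) : Finset (Fin (2 * t) → Fin t) :=
  (neck t).filter (fun f => ∀ P, Fair2 t f P → r ≤ (cutsOf P : ℝ))

/-- The binary entropy function. -/
def binEnt (x : ℝ) : ℝ := -(x * Real.logb 2 x) - (1 - x) * Real.logb 2 (1 - x)





lemma log_two_pos' : (0:ℝ) < Real.log 2 := Real.log_pos (by norm_num)

lemma binEnt_eq (x : ℝ) : binEnt x = Real.binEntropy x / Real.log 2 := by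
  unfold binEnt Real.binEntropy Real.logb
  rw [Real.log_inv, Real.log_inv]
  ring

lemma binEnt_half : binEnt (1/2) = 1 := by
  rw [binEnt_eq, show (1/2:ℝ) = 2⁻¹ by norm_num, Real.binEntropy_two_inv]
  exact div_self (ne_of_gt log_two_pos')

lemma binEnt_zero : binEnt 0 = 0 := by simp [binEnt_eq]

/-- the key numeric fact -/
lemma binEnt_011 : binEnt 0.11 < 1/2 := by
  have key : (100:ℝ)^(100:ℕ) < 2^(50:ℕ) * 11^(11:ℕ) * 89^(89:ℕ) := by norm_num
  have hlog : Real.log ((100:ℝ)^(100:ℕ)) < Real.log (2^(50:ℕ) * 11^(11:ℕ) * 89^(89:ℕ)) :=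
    Real.log_lt_log (by positivity) key
  rw [Real.log_pow] at hlog
  rw [Real.log_mul (by positivity) (by positivity), Real.log_mul (by positivity) (by positivity),
    Real.log_pow, Real.log_pow, Real.log_pow] at hlog
  push_cast at hlog
  -- hlog : 100 * log 100 < 50 * log 2 + 11 * log 11 + 89 * log 89
  have h11 : Real.log 0.11 = Real.log 11 - Real.log 100 := by
    rw [show (0.11:ℝ) = 11/100 by norm_num, Real.log_div (by norm_num) (by norm_num)]
  have h89 : Real.log 0.89 = Real.log 89 - Real.log 100 := by
    rw [show (0.89:ℝ) = 89/100 by norm_num, Real.log_div (by norm_num) (by norm_num)]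
  have hL := log_two_pos'
  unfold binEnt Real.logb
  rw [show (1:ℝ) - 0.11 = 0.89 by norm_num, h11, h89]
  rw [show -(0.11 * ((Real.log 11 - Real.log 100) / Real.log 2)) -
      0.89 * ((Real.log 89 - Real.log 100) / Real.log 2)
      = (-(0.11 * (Real.log 11 - Real.log 100)) -
        0.89 * (Real.log 89 - Real.log 100)) / Real.log 2 by ring]
  rw [div_lt_iff₀ hL]
  nlinarith [hlog]

lemma binEnt_mono {a b : ℝ} (ha : 0 ≤ a) (hab : a ≤ b) (hb : b ≤ 1/2) : binEnt a ≤ binEnt b := by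
  rw [binEnt_eq, binEnt_eq, div_le_div_iff_of_pos_right log_two_pos']
  exact Real.binEntropy_strictMonoOn.monotoneOn ⟨ha, by norm_num; linarith⟩
      ⟨by linarith, by norm_num; linarith⟩ hab

lemma binEnt_strict {a b : ℝ} (ha : 0 ≤ a) (hab : a < b) (hb : b ≤ 1/2) : binEnt a < binEnt b := by
  rw [binEnt_eq, binEnt_eq, div_lt_div_iff_of_pos_right log_two_pos']
  exact Real.binEntropy_strictMonoOn ⟨ha, by norm_num; linarith⟩
      ⟨by linarith, by norm_num; linarith⟩ hab

lemma exists_xstar : ∃ x : ℝ, 0 ≤ x ∧ x ≤ 1/2 ∧ binEnt x = 1/2 ∧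
    ∀ y : ℝ, 0 ≤ y → y ≤ 1/2 → binEnt y = 1/2 → y = x := by
  have hcont : ContinuousOn Real.binEntropy (Set.Icc 0 (1/2:ℝ)) :=
    Real.binEntropy_continuous.continuousOn
  have hIVT := intermediate_value_Icc (by norm_num : (0:ℝ) ≤ 1/2) hcont
  have hmem : (1/2 * Real.log 2) ∈ Set.Icc (Real.binEntropy 0) (Real.binEntropy (1/2)) := by
    rw [Real.binEntropy_zero, show (1/2:ℝ) = 2⁻¹ by norm_num, Real.binEntropy_two_inv]
    constructor
    · positivity
    · nlinarith [log_two_pos']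
  obtain ⟨x, hx, hfx⟩ := hIVT hmem
  refine ⟨x, hx.1, hx.2, ?_, ?_⟩
  · rw [binEnt_eq, hfx]; field_simp
  · intro y hy0 hy2 hy
    have hfy : Real.binEntropy y = 1/2 * Real.log 2 := by
      rw [binEnt_eq] at hy
      field_simp at hy ⊢
      linarith [hy]
    have h2 : (1/2:ℝ) = 2⁻¹ := by norm_num
    apply Real.binEntropy_strictMonoOn.injOn ⟨hy0, by rw [← h2]; exact hy2⟩
      ⟨hx.1, by rw [← h2]; exact hx.2⟩ (hfy.trans hfx.symm)

lemma binEnt_zero' : binEnt 0 = 0 := by simp [binEnt, Real.logb]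

/-- Entropy bound on partial sums of binomial coefficients. -/
lemma sum_choose_le_rpow (m k : ℕ) (hkm : 2 * k ≤ m) :
    (∑ j ∈ Finset.range (k+1), (m.choose j : ℝ)) ≤
      (2:ℝ) ^ ((m:ℝ) * binEnt ((k:ℝ)/(m:ℝ))) := by
  rcases Nat.eq_zero_or_pos k with hk | hk
  · subst hk
    simp [binEnt_zero']
  have hm : 0 < m := lt_of_lt_of_le (by omega) hkm
  have hmR : (0:ℝ) < m := by exact_mod_cast hm
  set p : ℝ := (k:ℝ)/(m:ℝ) with hp_def
  have hp0 : 0 < p := by positivity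
  have hp2 : p ≤ 1/2 := by
    rw [hp_def, div_le_iff₀ hmR]
    have : (2*k : ℝ) ≤ m := by exact_mod_cast hkm
    linarith
  set q : ℝ := 1 - p with hq_def
  have hq0 : 0 < q := by simp [hq_def]; linarith
  have hpq : p ≤ q := by simp [hq_def]; linarith
  have hkm' : k ≤ m := by omega
  -- main term comparison
  have key : (∑ j ∈ Finset.range (k+1), (m.choose j : ℝ)) * (p^k * q^(m-k)) ≤ 1 := by
    have expand : (p + q)^m = ∑ j ∈ Finset.range (m+1), p^j * q^(m-j) * (m.choose j) :=
      add_pow p q m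
    have hone : (p + q) = 1 := by simp [hq_def]
    rw [Finset.sum_mul]
    calc ∑ j ∈ Finset.range (k+1), (m.choose j : ℝ) * (p^k * q^(m-k))
        ≤ ∑ j ∈ Finset.range (k+1), p^j * q^(m-j) * (m.choose j) := by
          apply Finset.sum_le_sum
          intro j hj
          rw [Finset.mem_range] at hj
          have hjk : j ≤ k := by omega
          have h1 : p^k * q^(m-k) ≤ p^j * q^(m-j) := by
            have e1 : p^k = p^j * p^(k-j) := by rw [← pow_add]; congr 1; omega
            have e2 : q^(m-j) = q^(k-j) * q^(m-k) := by rw [← pow_add]; congr 1; omega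
            rw [e1, e2]
            have h3 : p^(k-j) ≤ q^(k-j) := pow_le_pow_left₀ hp0.le hpq _
            calc p^j * p^(k-j) * q^(m-k) ≤ p^j * q^(k-j) * q^(m-k) := by
                  apply mul_le_mul_of_nonneg_right _ (by positivity)
                  exact mul_le_mul_of_nonneg_left h3 (by positivity)
              _ = p^j * (q^(k-j) * q^(m-k)) := by ring
          calc (m.choose j : ℝ) * (p^k * q^(m-k)) ≤ (m.choose j : ℝ) * (p^j * q^(m-j)) :=
                mul_le_mul_of_nonneg_left h1 (by positivity)
            _ = p^j * q^(m-j) * (m.choose j) := by ring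
      _ ≤ ∑ j ∈ Finset.range (m+1), p^j * q^(m-j) * (m.choose j) := by
          apply Finset.sum_le_sum_of_subset_of_nonneg
          · exact Finset.range_subset_range.2 (by omega)
          · intro j _ _; positivity
      _ = 1 := by rw [← expand, hone, one_pow]
  have hc : (0:ℝ) < p^k * q^(m-k) := by positivity
  have hS : (∑ j ∈ Finset.range (k+1), (m.choose j : ℝ)) ≤ (p^k * q^(m-k))⁻¹ := by
    rw [← one_div]
    rw [le_div_iff₀ hc]
    exact key
  refine hS.trans (le_of_eq ?_)
  -- (p^k q^(m-k))⁻¹ = 2 ^ (m binEnt p)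
  have hL : (0:ℝ) < Real.log 2 := Real.log_pos (by norm_num)
  rw [Real.rpow_def_of_pos (by norm_num : (0:ℝ) < 2)]
  rw [← Real.exp_log (x := (p^k * q^(m-k))⁻¹) (by positivity)]
  congr 1
  rw [Real.log_inv, Real.log_mul (by positivity) (by positivity), Real.log_pow, Real.log_pow]
  have hmk : ((m - k : ℕ) : ℝ) = (m:ℝ) - k := by rw [Nat.cast_sub hkm']
  have hpm : (m:ℝ) * p = k := by rw [hp_def]; field_simp
  have expand : Real.log 2 * ((m:ℝ) * binEnt p) =
      -(((m:ℝ)*p) * Real.log p + ((m:ℝ)*(1-p)) * Real.log (1-p)) := by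
    unfold binEnt Real.logb
    field_simp
    ring
  rw [expand, hpm, hmk]
  have h2 : (m:ℝ)*(1-p) = (m:ℝ) - k := by rw [← hpm]; ring
  rw [h2]


/-- the set of adjacent pairs -/
def adjE (n : ℕ) : Finset (Fin n × Fin n) :=
  Finset.univ.filter (fun p => (p.1 : ℕ) + 1 = (p.2 : ℕ))

lemma adjE_card (n : ℕ) : (adjE n).card = n - 1 := by
  rcases Nat.eq_zero_or_pos n with h | h
  · subst h; simp [adjE]
  rw [show n - 1 = (Finset.range (n-1)).card from (Finset.card_range _).symm]
  apply Finset.card_bij (fun (p : Fin n × Fin n) _ => (p.1 : ℕ))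
  · intro p hp
    simp only [adjE, Finset.mem_filter] at hp
    have := p.2.2
    simp only [Finset.mem_range]
    omega
  · intro p hp q hq hpq
    simp only [adjE, Finset.mem_filter] at hp hq
    ext
    · exact hpq
    · omega
  · intro b hb
    simp only [Finset.mem_range] at hb
    refine ⟨(⟨b, by omega⟩, ⟨b+1, by omega⟩), ?_, rfl⟩
    simp [adjE]

lemma cuts_injOn (n : ℕ) (hn : 0 < n) (P Q : Fin n → Fin 2)
    (h0 : P ⟨0, hn⟩ = Q ⟨0, hn⟩)
    (hS : Finset.univ.filter (fun p : Fin n × Fin n =>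
        (p.1 : ℕ) + 1 = (p.2 : ℕ) ∧ P p.1 ≠ P p.2) =
      Finset.univ.filter (fun p : Fin n × Fin n =>
        (p.1 : ℕ) + 1 = (p.2 : ℕ) ∧ Q p.1 ≠ Q p.2)) : P = Q := by
  have key : ∀ v : ℕ, ∀ hv : v < n, P ⟨v, hv⟩ = Q ⟨v, hv⟩ := by
    intro v
    induction v with
    | zero => intro hv; exact h0
    | succ w ih =>
      intro hv
      have hw : w < n := by omega
      have hmem := Finset.ext_iff.mp hS (⟨w, hw⟩, ⟨w+1, hv⟩)
      simp only [Finset.mem_filter, Finset.mem_univ, true_and] at hmem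
      have hPQ := ih hw
      have dec : ∀ a b c d : Fin 2, a = c → ((a ≠ b) ↔ (c ≠ d)) → b = d := by decide
      exact dec _ _ _ _ hPQ hmem
  funext p
  have : p = ⟨(p:ℕ), p.2⟩ := by ext; rfl
  rw [this]
  exact key _ _

/-- counting partitions with at most k cuts -/
lemma card_cuts_le (n k : ℕ) (hn : 0 < n) :
    (Finset.univ.filter (fun P : Fin n → Fin 2 => cutsOf P ≤ k)).card ≤
      2 * ∑ j ∈ Finset.range (k+1), (n-1).choose j := by
  classical
  set T := (Finset.univ : Finset (Fin 2)) ×ˢ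
    ((Finset.range (k+1)).biUnion (fun j => (adjE n).powersetCard j)) with hT
  have hinj : ∀ P ∈ Finset.univ.filter (fun P : Fin n → Fin 2 => cutsOf P ≤ k),
      (P ⟨0,hn⟩, Finset.univ.filter (fun p : Fin n × Fin n =>
        (p.1 : ℕ) + 1 = (p.2 : ℕ) ∧ P p.1 ≠ P p.2)) ∈ T := by
    intro P hP
    simp only [Finset.mem_filter, Finset.mem_univ, true_and] at hP
    simp only [hT, Finset.mem_product, Finset.mem_univ, true_and, Finset.mem_biUnion,
      Finset.mem_range, Finset.mem_powersetCard]
    refine ⟨cutsOf P, by omega, ?_, rfl⟩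
    intro p hp
    simp only [Finset.mem_filter] at hp
    simp [adjE, hp.2.1]
  have hcard := Finset.card_le_card_of_injOn _ hinj ?inj
  case inj =>
    intro P hP Q hQ h
    simp only [Prod.mk.injEq] at h
    exact cuts_injOn n hn P Q h.1 h.2
  refine hcard.trans ?_
  rw [hT, Finset.card_product]
  simp only [Finset.card_univ, Fintype.card_fin]
  apply Nat.mul_le_mul_left
  refine (Finset.card_biUnion_le).trans ?_
  apply Finset.sum_le_sum
  intro j _
  rw [Finset.card_powersetCard, adjE_card]


lemma fair_bij {t : ℕ} {f : Fin (2*t) → Fin t} {P : Fin (2*t) → Fin 2} (hf : Fair2 t f P)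
    (j : Fin 2) :
    Function.Bijective (fun p : {p : Fin (2*t) // P p = j} => f p.1) := by
  constructor
  · rintro ⟨p, hp⟩ ⟨q, hq⟩ hpq
    simp only at hpq
    have h1 := hf j (f p)
    rw [Finset.card_eq_one] at h1
    obtain ⟨a, ha⟩ := h1
    have hp' : p ∈ Finset.univ.filter (fun r => P r = j ∧ f r = f p) := by simp [hp]
    have hq' : q ∈ Finset.univ.filter (fun r => P r = j ∧ f r = f p) := by simp [hq, hpq]
    rw [ha, Finset.mem_singleton] at hp' hq'
    exact Subtype.ext (hp'.trans hq'.symm)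
  · intro i
    have h1 := hf j i
    rw [Finset.card_eq_one] at h1
    obtain ⟨a, ha⟩ := h1
    have : a ∈ Finset.univ.filter (fun r => P r = j ∧ f r = i) := by
      rw [ha]; exact Finset.mem_singleton_self a
    simp only [Finset.mem_filter, Finset.mem_univ, true_and] at this
    exact ⟨⟨a, this.1⟩, this.2⟩

lemma fair_count (t : ℕ) (P : Fin (2*t) → Fin 2) :
    (Finset.univ.filter (fun f : Fin (2*t) → Fin t => Fair2 t f P)).card ≤
      t.factorial ^ 2 := by
  classical
  rcases Finset.eq_empty_or_nonempty
    (Finset.univ.filter (fun f : Fin (2*t) → Fin t => Fair2 t f P)) with he | ⟨f₀, hf₀⟩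
  · rw [he]; simp
  simp only [Finset.mem_filter, Finset.mem_univ, true_and] at hf₀
  have hcard : ∀ j : Fin 2, Fintype.card {p : Fin (2*t) // P p = j} = t := by
    intro j
    have := Fintype.card_of_bijective (fair_bij hf₀ j)
    simpa using this
  set w : ∀ j : Fin 2, {p : Fin (2*t) // P p = j} ≃ Fin t :=
    fun j => Equiv.ofBijective _ (fair_bij hf₀ j) with hw
  set Φ : (Fin (2*t) → Fin t) → (∀ j : Fin 2, {p : Fin (2*t) // P p = j} ≃ Fin t) :=
    fun f => if h : Fair2 t f P then fun j => Equiv.ofBijective _ (fair_bij h j) else w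
    with hΦ
  have key : (Finset.univ.filter (fun f : Fin (2*t) → Fin t => Fair2 t f P)).card ≤
      Fintype.card (∀ j : Fin 2, {p : Fin (2*t) // P p = j} ≃ Fin t) := by
    rw [← Finset.card_univ]
    apply Finset.card_le_card_of_injOn Φ (fun _ _ => Finset.mem_univ _)
    intro f hf g hg hfg
    simp only [Finset.coe_filter, Finset.mem_univ, true_and, Set.mem_setOf_eq] at hf hg
    funext p
    have h1 : Φ f (P p) ⟨p, rfl⟩ = f p := by rw [hΦ]; simp [dif_pos hf, Equiv.ofBijective]
    have h2 : Φ g (P p) ⟨p, rfl⟩ = g p := by rw [hΦ]; simp [dif_pos hg, Equiv.ofBijective]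
    rw [← h1, ← h2, hfg]
  refine key.trans (le_of_eq ?_)
  rw [Fintype.card_pi]
  have : ∀ j : Fin 2, Fintype.card ({p : Fin (2*t) // P p = j} ≃ Fin t) = t.factorial := by
    intro j
    rw [Fintype.card_equiv (w j), hcard j]
  simp only [this]
  rw [Finset.prod_const, Finset.card_univ, Fintype.card_fin]


def Phi (t : ℕ) (e : Fin (2*t) ≃ Fin t × Fin 2) : Fin (2*t) → Fin t := fun p => (e p).1

lemma pair_filter_card (t : ℕ) (i : Fin t) :
    (Finset.univ.filter (fun q : Fin t × Fin 2 => q.1 = i)).card = 2 := by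
  have h01 : ∀ b : Fin 2, b = 0 ∨ b = 1 := by decide
  have : (Finset.univ.filter (fun q : Fin t × Fin 2 => q.1 = i)) = {(i,0), (i,1)} := by
    ext ⟨a, b⟩
    simp only [Finset.mem_filter, Finset.mem_univ, true_and, Finset.mem_insert,
      Finset.mem_singleton, Prod.mk.injEq]
    constructor
    · rintro rfl
      rcases h01 b with rfl | rfl
      · exact Or.inl ⟨rfl, rfl⟩
      · exact Or.inr ⟨rfl, rfl⟩
    · rintro (⟨rfl, rfl⟩ | ⟨rfl, rfl⟩) <;> rfl
  rw [this, Finset.card_insert_of_notMem (by simp), Finset.card_singleton]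

lemma Phi_mem_neck (t : ℕ) (e : Fin (2*t) ≃ Fin t × Fin 2) : Phi t e ∈ neck t := by
  simp only [neck, Finset.mem_filter, Finset.mem_univ, true_and]
  intro i
  have h : (Finset.univ.filter (fun p : Fin (2*t) => Phi t e p = i)) =
      ((Finset.univ.filter (fun q : Fin t × Fin 2 => q.1 = i)).image e.symm) := by
    ext p
    simp only [Finset.mem_filter, Finset.mem_univ, true_and, Finset.mem_image, Phi]
    constructor
    · intro h; exact ⟨e p, by simpa using (Finset.mem_filter.mp h).2⟩
    · rintro ⟨q, hq, rfl⟩; exact Finset.mem_filter.mpr ⟨Finset.mem_univ _, by simpa using hq⟩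
  rw [h, Finset.card_image_of_injective _ e.symm.injective, pair_filter_card]

/-- fibers of Phi over a fixed necklace f have at most 2^t elements -/
lemma Phi_fiber_le (t : ℕ) (f : Fin (2*t) → Fin t) :
    (Finset.univ.filter (fun e : Fin (2*t) ≃ Fin t × Fin 2 => Phi t e = f)).card ≤ 2^t := by
  classical
  have : 2^t = Fintype.card (Fin t → Bool) := by simp [Fintype.card_fun]
  rw [this, ← Finset.card_univ]
  apply Finset.card_le_card_of_injOn
    (fun e => fun i => decide ((e.symm (i, 0) : Fin (2*t)) < e.symm (i, 1)))
    (fun _ _ => Finset.mem_univ _)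
  intro e he e' he' hgg
  simp only [Finset.coe_filter, Finset.mem_univ, true_and, Set.mem_setOf_eq] at he he'
  -- first: the unordered fiber pairs agree
  have hsymm : ∀ z : Fin t × Fin 2, e.symm z = e'.symm z := by
    intro ⟨i, b⟩
    -- the two-element sets {e.symm (i,0), e.symm (i,1)} and primed agree
    have hset : ∀ p : Fin (2*t), (e p).1 = i ↔ (e' p).1 = i := by
      intro p
      have h1 : (e p).1 = f p := by rw [← he]; rfl
      have h2 : (e' p).1 = f p := by rw [← he']; rfl
      rw [h1, h2]
    have key : ∀ p : Fin (2*t), (p = e.symm (i,0) ∨ p = e.symm (i,1)) ↔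
        (p = e'.symm (i,0) ∨ p = e'.symm (i,1)) := by
      intro p
      have l : ∀ (E : Fin (2*t) ≃ Fin t × Fin 2), (E p).1 = i ↔
          (p = E.symm (i,0) ∨ p = E.symm (i,1)) := by
        intro E
        constructor
        · intro h
          have h01 : ∀ b : Fin 2, b = 0 ∨ b = 1 := by decide
          rcases h01 (E p).2 with hb | hb
          · left; rw [← h, ← hb]; simp
          · right; rw [← h, ← hb]; simp
        · rintro (rfl | rfl) <;> simp
      rw [← l e, ← l e', hset]
    -- now deduce equality using the order bit
    have hne : e.symm (i,(0:Fin 2)) ≠ e.symm (i,1) := by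
      intro hcontra
      have := e.symm.injective hcontra
      simp at this
    have hne' : e'.symm (i,(0:Fin 2)) ≠ e'.symm (i,1) := by
      intro hcontra
      have := e'.symm.injective hcontra
      simp at this
    have c0 := (key (e.symm (i,0))).mp (Or.inl rfl)
    have c1 := (key (e.symm (i,1))).mp (Or.inr rfl)
    have hbit := congrFun hgg i
    simp only [decide_eq_decide] at hbit
    have h01 : b = 0 ∨ b = 1 := (by decide : ∀ c : Fin 2, c = 0 ∨ c = 1) b
    rcases c0 with hac | had
    · rcases c1 with hbc | hbd
      · exact absurd (hac.trans hbc.symm) hne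
      · rcases h01 with rfl | rfl
        · exact hac
        · exact hbd
    · rcases c1 with hbc | hbd
      · exfalso
        rw [had, hbc] at hbit
        rcases lt_or_gt_of_ne hne' with hlt | hgt
        · exact absurd (hbit.mpr hlt) (lt_asymm hlt)
        · exact absurd (hbit.mp hgt) (lt_asymm hgt)
      · exact absurd (had.trans hbd.symm) hne
  have : e = e' := by
    have h1 : e.symm = e'.symm := Equiv.ext hsymm
    have : e.symm.symm = e'.symm.symm := by rw [h1]
    simpa using this
  exact this

lemma neck_lower (t : ℕ) : (2*t).factorial ≤ 2^t * (neck t).card := by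
  classical
  have e₀ : Fin (2*t) ≃ Fin t × Fin 2 :=
    (finCongr (mul_comm 2 t)).trans finProdFinEquiv.symm
  have hcard : Fintype.card (Fin (2*t) ≃ Fin t × Fin 2) = (2*t).factorial := by
    rw [Fintype.card_equiv e₀, Fintype.card_fin]
  rw [← hcard, ← Finset.card_univ]
  rw [Finset.card_eq_sum_card_image (Phi t) Finset.univ]
  calc ∑ f ∈ Finset.univ.image (Phi t),
        (Finset.univ.filter (fun e => Phi t e = f)).card
      ≤ ∑ _f ∈ Finset.univ.image (Phi t), 2^t :=
        Finset.sum_le_sum (fun f _ => Phi_fiber_le t f)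
    _ = (Finset.univ.image (Phi t)).card * 2^t := by rw [Finset.sum_const, smul_eq_mul]
    _ ≤ (neck t).card * 2^t := by
        apply Nat.mul_le_mul_right
        apply Finset.card_le_card
        intro f hf
        simp only [Finset.mem_image] at hf
        obtain ⟨e, _, rfl⟩ := hf
        exact Phi_mem_neck t e
    _ = 2^t * (neck t).card := Nat.mul_comm _ _

lemma neck_nonempty (t : ℕ) (ht : 0 < t) : ∃ f, f ∈ neck t := by
  refine ⟨fun p => ⟨p % t, Nat.mod_lt _ ht⟩, ?_⟩
  simp only [neck, Finset.mem_filter, Finset.mem_univ, true_and]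
  intro i
  have : (Finset.univ.filter (fun p : Fin (2*t) => (⟨(p:ℕ) % t, Nat.mod_lt _ ht⟩ : Fin t) = i))
      = {(⟨i, by omega⟩ : Fin (2*t)), ⟨i + t, by omega⟩} := by
    ext p
    simp only [Finset.mem_filter, Finset.mem_univ, true_and, Finset.mem_insert,
      Finset.mem_singleton, Fin.ext_iff]
    have hp := p.2
    have hi := i.2
    constructor
    · intro h
      have h2 := (Nat.div_add_mod (p:ℕ) t).symm
      have hq : (p:ℕ)/t < 2 := Nat.div_lt_of_lt_mul (by omega)
      rcases (Nat.lt_succ_iff_lt_or_eq.mp hq).imp Nat.lt_one_iff.mp id with hd | hd <;> rw [hd] at h2 <;> omega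
    · rintro (h | h)
      · simp only [h]
        exact Nat.mod_eq_of_lt hi
      · simp only [h]
        rw [Nat.add_mod_right]
        exact Nat.mod_eq_of_lt hi
  rw [this, Finset.card_insert_of_notMem (by simp only [Finset.mem_singleton, Fin.ext_iff]; omega), Finset.card_singleton]


lemma neck_card_pos (t : ℕ) (ht : 0 < t) : 0 < (neck t).card := by
  obtain ⟨f, hf⟩ := neck_nonempty t ht
  exact Finset.card_pos.mpr ⟨f, hf⟩

lemma hardNeck_anti (t : ℕ) {r r' : ℝ} (h : r ≤ r') : hardNeck t r' ⊆ hardNeck t r := by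
  intro f hf
  simp only [hardNeck, Finset.mem_filter] at hf ⊢
  exact ⟨hf.1, fun P hP => h.trans (hf.2 P hP)⟩

/-- The main eventual estimate. -/
lemma main_est (ε x : ℝ) (hε : 0 < ε) (hx0 : 0 ≤ x) (hx2 : x ≤ 1/2) (hbx : binEnt x = 1/2) :
    ∀ᶠ t : ℕ in Filter.atTop,
      1 - ε ≤ ((hardNeck t ((2*x - ε)*t)).card : ℝ) / ((neck t).card : ℝ) := by
  classical
  set y : ℝ := max (x - ε/4) 0 with hy_def
  have hy0 : 0 ≤ y := le_max_right _ _
  have hy2 : y ≤ 1/2 := by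
    rcases le_total (x - ε/4) 0 with h | h
    · rw [hy_def, max_eq_right h]; norm_num
    · rw [hy_def, max_eq_left h]; linarith
  have hδ : 0 < 1/2 - binEnt y := by
    rcases le_or_gt x (ε/4) with h | h
    · have : y = 0 := by rw [hy_def, max_eq_right (by linarith)]
      rw [this, binEnt_zero]; norm_num
    · have hy_eq : y = x - ε/4 := by rw [hy_def, max_eq_left (by linarith)]
      have : binEnt y < binEnt x := by
        rw [hy_eq]; exact binEnt_strict (by linarith) (by linarith) hx2
      rw [hbx] at this; linarith
  set δ : ℝ := 1/2 - binEnt y with hδ_def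
  set rr : ℝ := (2:ℝ) ^ (-δ : ℝ) with hrr_def
  have hrr0 : 0 < rr := Real.rpow_pos_of_pos (by norm_num) _
  have hrr1 : rr < 1 := Real.rpow_lt_one_of_one_lt_of_neg (by norm_num) (by linarith)
  clear_value y δ rr
  -- the geometric decay eventuality
  have hgeo : Filter.Tendsto (fun t : ℕ => 2*(2*(t:ℝ)+1) * rr^t)
      Filter.atTop (nhds 0) := by
    have h1 : Filter.Tendsto (fun t : ℕ => (t:ℝ)^(1:ℕ) * rr^t) Filter.atTop (nhds 0) :=
      tendsto_pow_const_mul_const_pow_of_lt_one 1 hrr0.le hrr1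
    have h2 : Filter.Tendsto (fun t : ℕ => rr^t) Filter.atTop (nhds 0) :=
      tendsto_pow_atTop_nhds_zero_of_lt_one hrr0.le hrr1
    have h3 := (h1.const_mul 4).add (h2.const_mul 2)
    simp only [mul_zero, add_zero, zero_add] at h3
    have heq : (fun t : ℕ => 2*(2*(t:ℝ)+1) * rr^t)
        = fun t : ℕ => 4*((t:ℝ)^(1:ℕ)*rr^t) + 2*rr^t := by
      funext u; ring
    rw [heq]
    exact h3
  have hE3 := (hgeo.eventually_lt_const hε).and
    ((Filter.eventually_ge_atTop 1).and
      ((tendsto_natCast_atTop_atTop (R := ℝ)).eventually_ge_atTop (1/ε)))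
  filter_upwards [hE3] with t ⟨hE3t, ht1, htε⟩
  have htR : (1:ℝ) ≤ t := by exact_mod_cast ht1
  have hεt : 1 ≤ ε * t := by
    rw [div_le_iff₀ hε] at htε
    nlinarith
  have hneckpos : (0:ℝ) < (neck t).card := by
    exact_mod_cast neck_card_pos t ht1
  set r : ℝ := (2*x - ε)*t with hr_def
  rcases le_or_gt r 0 with hr0 | hr0
  · -- trivial case: hardNeck = neck
    have : hardNeck t r = neck t := by
      apply Finset.filter_true_of_mem
      intro f _
      intro P _
      have : (0:ℝ) ≤ (cutsOf P : ℝ) := Nat.cast_nonneg _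
      linarith
    rw [this, div_self (ne_of_gt hneckpos)]
    linarith
  -- nontrivial case
  have hx_lb : ε/2 < x := by nlinarith
  have hy_eq : y = x - ε/4 := by rw [hy_def, max_eq_left (by linarith)]
  set k : ℕ := ⌈r⌉₊ - 1 with hk_def
  have hceil1 : 1 ≤ ⌈r⌉₊ := Nat.one_le_iff_ne_zero.mpr (by
    intro h
    have := Nat.ceil_eq_zero.mp h
    linarith)
  have hkR : (k:ℝ) = (⌈r⌉₊ : ℝ) - 1 := by
    rw [hk_def, Nat.cast_sub hceil1, Nat.cast_one]
  have hk_lt_r : (k:ℝ) < r := by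
    have := Nat.ceil_lt_add_one (le_of_lt hr0)
    rw [hkR]; linarith
  have hcut : ∀ P : Fin (2*t) → Fin 2, (cutsOf P : ℝ) < r → cutsOf P ≤ k := by
    intro P hP
    have h1 : (cutsOf P : ℝ) < ⌈r⌉₊ := hP.trans_le (Nat.le_ceil r)
    have h2 : cutsOf P < ⌈r⌉₊ := by exact_mod_cast h1
    omega
  set m : ℕ := 2*t - 1 with hm_def
  have hmR : (m:ℝ) = 2*(t:ℝ) - 1 := by
    rw [hm_def, Nat.cast_sub (by omega), Nat.cast_mul]; norm_num
  clear_value r k m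
  have hr_le : r ≤ (1 - ε)*t := by
    rw [hr_def]
    have : 2*x - ε ≤ 1 - ε := by linarith
    nlinarith
  have hk_lt_t : (k:ℝ) < t := by nlinarith
  have hkt : k < t := by exact_mod_cast hk_lt_t
  have h2km : 2*k ≤ m := by omega
  -- entropy bound on the sum
  have hS := sum_choose_le_rpow m k h2km
  have hkm_le_y : (k:ℝ)/(m:ℝ) ≤ y := by
    rw [hy_eq, div_le_iff₀ (by rw [hmR]; linarith)]
    rw [hmR]
    have : r ≤ (x - ε/4)*(2*(t:ℝ)-1) := by
      rw [hr_def]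
      nlinarith
    linarith
  have hent : binEnt ((k:ℝ)/(m:ℝ)) ≤ binEnt y :=
    binEnt_mono (by positivity) hkm_le_y hy2
  have hexp : (m:ℝ) * binEnt ((k:ℝ)/(m:ℝ)) ≤ (t:ℝ) - δ*t := by
    have h1 : (m:ℝ) * binEnt ((k:ℝ)/(m:ℝ)) ≤ (m:ℝ) * (1/2 - δ) := by
      apply mul_le_mul_of_nonneg_left _ (by rw [hmR]; linarith)
      rw [hδ_def]; linarith
    have h2 : (m:ℝ) * (1/2 - δ) ≤ (t:ℝ) - δ*t := by
      rw [hmR]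
      nlinarith [mul_nonneg (sub_nonneg.mpr htR) hδ.le]
    linarith
  have hS2 : (∑ j ∈ Finset.range (k+1), (m.choose j : ℝ)) ≤ (2:ℝ)^(t:ℝ) * rr^t := by
    refine hS.trans ?_
    have h1 : (2:ℝ) ^ ((m:ℝ) * binEnt ((k:ℝ)/(m:ℝ))) ≤ (2:ℝ) ^ ((t:ℝ) - δ*t) :=
      Real.rpow_le_rpow_of_exponent_le (by norm_num) hexp
    refine h1.trans (le_of_eq ?_)
    rw [hrr_def, ← Real.rpow_natCast ((2:ℝ)^(-δ:ℝ)) t, ← Real.rpow_mul (by norm_num : (0:ℝ) ≤ 2),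
      ← Real.rpow_add (by norm_num : (0:ℝ) < 2)]
    congr 1
    ring
  -- counting bad necklaces
  set badP := Finset.univ.filter (fun P : Fin (2*t) → Fin 2 => cutsOf P ≤ k) with hbadP
  set bad := (neck t).filter (fun f => ¬ (∀ P, Fair2 t f P → r ≤ (cutsOf P : ℝ))) with hbad
  have hbad_sub : bad ⊆ badP.biUnion
      (fun P => Finset.univ.filter (fun f : Fin (2*t) → Fin t => Fair2 t f P)) := by
    intro f hf
    rw [hbad, Finset.mem_filter] at hf
    obtain ⟨_, hf2⟩ := hf
    push_neg at hf2
    obtain ⟨P, hP1, hP2⟩ := hf2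
    rw [Finset.mem_biUnion]
    exact ⟨P, by simp [hbadP, hcut P hP2], by simp [hP1]⟩
  have hbad_card : (bad.card : ℝ) ≤ 2 * ((2:ℝ)^(t:ℝ) * rr^t) * (t.factorial:ℝ)^2 := by
    have h1 : bad.card ≤ badP.card * t.factorial^2 := by
      refine (Finset.card_le_card hbad_sub).trans ?_
      refine (Finset.card_biUnion_le).trans ?_
      calc ∑ P ∈ badP, (Finset.univ.filter (fun f : Fin (2*t) → Fin t => Fair2 t f P)).card
          ≤ ∑ _P ∈ badP, t.factorial^2 := Finset.sum_le_sum (fun P _ => fair_count t P)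
        _ = badP.card * t.factorial^2 := by rw [Finset.sum_const, smul_eq_mul]
    have h2 : badP.card ≤ 2 * ∑ j ∈ Finset.range (k+1), (2*t-1).choose j :=
      card_cuts_le (2*t) k (by omega)
    rw [← hm_def] at h2
    have h3 : (badP.card : ℝ) ≤ 2 * ∑ j ∈ Finset.range (k+1), ((m.choose j : ℕ) : ℝ) := by
      rw [← Nat.cast_sum]
      exact_mod_cast h2
    calc (bad.card : ℝ) ≤ (badP.card : ℝ) * (t.factorial:ℝ)^2 := by exact_mod_cast h1
      _ ≤ (2 * ∑ j ∈ Finset.range (k+1), ((m.choose j : ℕ) : ℝ)) * (t.factorial:ℝ)^2 := by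
          apply mul_le_mul_of_nonneg_right h3 (by positivity)
      _ ≤ 2 * ((2:ℝ)^(t:ℝ) * rr^t) * (t.factorial:ℝ)^2 := by
          apply mul_le_mul_of_nonneg_right _ (by positivity)
          linarith [hS2]
  -- lower bound on neck card
  have hneck_lb : (2:ℝ)^(t:ℝ) * (t.factorial:ℝ)^2 / (2*(t:ℝ)+1) ≤ ((neck t).card : ℝ) := by
    have h1 : (2*t).factorial ≤ 2^t * (neck t).card := neck_lower t
    have h2 : 4^t ≤ (2*t+1) * Nat.centralBinom t := by
      calc 4^t = ∑ j ∈ Finset.range (2*t+1), (2*t).choose j := by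
            rw [Nat.sum_range_choose]
            rw [pow_mul]
            norm_num
        _ ≤ ∑ _j ∈ Finset.range (2*t+1), Nat.centralBinom t :=
            Finset.sum_le_sum (fun j _ => Nat.choose_le_centralBinom j t)
        _ = (2*t+1) * Nat.centralBinom t := by
            rw [Finset.sum_const, smul_eq_mul, Finset.card_range]
    have h3 : Nat.centralBinom t * (t.factorial * t.factorial) = (2*t).factorial := by
      rw [Nat.centralBinom]
      have := Nat.choose_mul_factorial_mul_factorial (show t ≤ 2*t by omega)
      rw [show 2*t - t = t by omega] at this
      rw [← this]; ring
    -- combine: 4^t * t!^2 ≤ (2t+1) * centralBinom * t!^2 = (2t+1) * (2t)! ≤ (2t+1) * 2^t * neck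
    have h4 : 4^t * (t.factorial * t.factorial) ≤ (2*t+1) * (2^t * (neck t).card) := by
      calc 4^t * (t.factorial * t.factorial)
          ≤ ((2*t+1) * Nat.centralBinom t) * (t.factorial * t.factorial) :=
            Nat.mul_le_mul_right _ h2
        _ = (2*t+1) * (2*t).factorial := by rw [← h3]; ring
        _ ≤ (2*t+1) * (2^t * (neck t).card) := Nat.mul_le_mul_left _ h1
    have h4R : (4:ℝ)^t * ((t.factorial:ℝ) * t.factorial) ≤
        (2*(t:ℝ)+1) * ((2:ℝ)^t * ((neck t).card : ℝ)) := by exact_mod_cast h4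
    rw [div_le_iff₀ (by positivity), Real.rpow_natCast]
    have h5 : (4:ℝ)^t = (2:ℝ)^t * (2:ℝ)^t := by
      rw [← mul_pow]; norm_num
    have h2t : (0:ℝ) < (2:ℝ)^t := by positivity
    apply le_of_mul_le_mul_left _ h2t
    calc (2:ℝ)^t * ((2:ℝ)^t * (t.factorial:ℝ)^2)
        = (4:ℝ)^t * ((t.factorial:ℝ) * (t.factorial:ℝ)) := by rw [h5]; ring
      _ ≤ (2*(t:ℝ)+1) * ((2:ℝ)^t * ((neck t).card : ℝ)) := h4R
      _ = (2:ℝ)^t * (((neck t).card : ℝ) * (2*(t:ℝ)+1)) := by ring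
  -- final: bad ≤ ε * neck
  have hfinal : (bad.card : ℝ) ≤ ε * ((neck t).card : ℝ) := by
    have hstep : 2 * ((2:ℝ)^(t:ℝ) * rr^t) * (t.factorial:ℝ)^2 ≤
        ε * ((2:ℝ)^(t:ℝ) * (t.factorial:ℝ)^2 / (2*(t:ℝ)+1)) := by
      have heq : 2 * ((2:ℝ)^(t:ℝ) * rr^t) * (t.factorial:ℝ)^2
          = (2*(2*(t:ℝ)+1)*rr^t) * ((2:ℝ)^(t:ℝ) * (t.factorial:ℝ)^2 / (2*(t:ℝ)+1)) := by
        field_simp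
      rw [heq]
      exact mul_le_mul_of_nonneg_right hE3t.le (by positivity)
    refine hbad_card.trans (hstep.trans ?_)
    exact mul_le_mul_of_nonneg_left hneck_lb hε.le
  -- conclude
  have hsplit : (hardNeck t r).card + bad.card = (neck t).card := by
    rw [hardNeck, hbad]
    exact Finset.card_filter_add_card_filter_not _
  have hhard : ((hardNeck t r).card : ℝ) = ((neck t).card : ℝ) - (bad.card : ℝ) := by
    have h := congrArg (fun z : ℕ => (z : ℝ)) hsplit
    push_cast at h
    linarith
  rw [hhard, sub_div, div_self (ne_of_gt hneckpos)]
  have hbd : (bad.card:ℝ)/((neck t).card : ℝ) ≤ ε := by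
    rw [div_le_iff₀ hneckpos]
    nlinarith [hfinal]
  linarith


/-- With high probability, a random necklace with 2 beads of each of `t` types admits no
fair two-player partition with fewer than `(2 H⁻¹(1/2) - ε) t` cuts; in particular
`X(2,t,1) ≥ 0.22 t` with high probability as `t → ∞`. -/
theorem stmt17 :
    (∀ ε : ℝ, 0 < ε → ∃ t₀ : ℕ, ∀ t : ℕ, t₀ ≤ t →
      ∀ x : ℝ, 0 ≤ x → x ≤ 1 / 2 → binEnt x = 1 / 2 →
        1 - ε ≤ ((hardNeck t ((2 * x - ε) * t)).card : ℝ) / ((neck t).card : ℝ)) ∧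
    Filter.Tendsto
      (fun t : ℕ => ((hardNeck t (0.22 * t)).card : ℝ) / ((neck t).card : ℝ))
      Filter.atTop (nhds 1) := by
  obtain ⟨xs, hxs0, hxs2, hxsE, hxsU⟩ := exists_xstar
  constructor
  · intro ε hε
    obtain ⟨t₀, ht₀⟩ := Filter.eventually_atTop.mp (main_est ε xs hε hxs0 hxs2 hxsE)
    refine ⟨t₀, fun t ht x hx0 hx2 hbx => ?_⟩
    rw [hxsU x hx0 hx2 hbx]
    exact ht₀ t ht
  · have hxs_gt : (0.11:ℝ) < xs := by
      by_contra h
      push_neg at h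
      have h2 := binEnt_mono hxs0 h (by norm_num)
      rw [hxsE] at h2
      linarith [binEnt_011]
    rw [Metric.tendsto_atTop]
    intro ε hε
    set ε' : ℝ := min (ε/2) (2*xs - 0.22) with hε'
    have hε'pos : 0 < ε' := lt_min (by linarith) (by norm_num; linarith)
    have h1 := (main_est ε' xs hε'pos hxs0 hxs2 hxsE).and (Filter.eventually_ge_atTop 1)
    obtain ⟨N, hN⟩ := Filter.eventually_atTop.mp h1
    refine ⟨N, fun t ht => ?_⟩
    obtain ⟨hrat, ht1⟩ := hN t ht
    have hneckpos : (0:ℝ) < ((neck t).card : ℝ) := by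
      exact_mod_cast neck_card_pos t ht1
    have hsub : hardNeck t ((2*xs - ε')*t) ⊆ hardNeck t ((0.22:ℝ)*t) := by
      apply hardNeck_anti t
      have h22 : (0.22:ℝ) ≤ 2*xs - ε' := by
        have := min_le_right (ε/2) (2*xs - 0.22)
        rw [← hε'] at this
        linarith
      exact mul_le_mul_of_nonneg_right h22 (Nat.cast_nonneg t)
    have hmono : ((hardNeck t ((2*xs - ε')*t)).card : ℝ) ≤
        ((hardNeck t ((0.22:ℝ)*t)).card : ℝ) := by
      exact_mod_cast Finset.card_le_card hsub
    have hge : 1 - ε' ≤ ((hardNeck t ((0.22:ℝ)*t)).card : ℝ) / ((neck t).card : ℝ) := by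
      refine hrat.trans ?_
      exact (div_le_div_iff_of_pos_right hneckpos).mpr hmono
    have hle1 : ((hardNeck t ((0.22:ℝ)*t)).card : ℝ) / ((neck t).card : ℝ) ≤ 1 := by
      rw [div_le_one hneckpos]
      exact_mod_cast Finset.card_le_card (Finset.filter_subset _ _)
    have hhalf : ε' ≤ ε/2 := min_le_left _ _
    rw [Real.dist_eq, abs_lt]
    constructor <;> linarith

end
end

section
/- Let f(t) = E[X(2,t,1)] be the expected minimum number of cuts for a fair two-player partition of a random necklace with 2 beads of each of t types. Then f(t+1) ≤ f(t) + 1/2 - f(t)/(2(2t+1)) + 1/(2t+2). -/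
open scoped Classical

noncomputable section

/-- `X(2,t,1)` for a given necklace: the minimum number of cuts in a fair partition. -/
def X2t1 (t : ℕ) (f : Fin (2 * t) → Fin t) : ℕ :=
  sInf {n : ℕ | ∃ P : Fin (2 * t) → Fin 2, Fair2 t f P ∧ cutsOf P = n}

/-- `f(t) = E[X(2,t,1)]`, the expected minimum number of cuts over a uniformly random
necklace with 2 beads of each of `t` types. -/
def expX (t : ℕ) : ℝ := (∑ f ∈ neck t, (X2t1 t f : ℝ)) / ((neck t).card : ℝ)

namespace NeckAux
open Finset
set_option linter.unusedSectionVars false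


variable {α : Type*} [DecidableEq α]

/-- equality indicator -/
def ind (a b : α) : ℕ := if a = b then 1 else 0

/-- cut indicator -/
def cut (a b : α) : ℕ := if a = b then 0 else 1

def cons (a : α) (s : ℕ → α) : ℕ → α := fun k => if k = 0 then a else s (k-1)

def tail (s : ℕ → α) : ℕ → α := fun k => s (k+1)

def ins (p : ℕ) (j : α) (s : ℕ → α) : ℕ → α :=
  fun k => if k < p then s k else if k = p then j else s (k-1)

@[simp] lemma cons_zero (a : α) (s : ℕ → α) : cons a s 0 = a := rfl
@[simp] lemma cons_succ (a : α) (s : ℕ → α) (k : ℕ) : cons a s (k+1) = s k := rfl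
@[simp] lemma tail_apply (s : ℕ → α) (k : ℕ) : tail s k = s (k+1) := rfl

lemma ins_zero (j : α) (s : ℕ → α) : ins 0 j s = cons j s := by
  funext k
  simp only [ins, cons]
  rcases Nat.eq_zero_or_pos k with h | h
  · simp [h]
  · simp [Nat.pos_iff_ne_zero.mp h, Nat.not_lt_zero]

lemma ins_succ (p : ℕ) (j : α) (s : ℕ → α) :
    ins (p+1) j s = cons (s 0) (ins p j (tail s)) := by
  funext k
  simp only [ins, cons, tail]
  rcases Nat.eq_zero_or_pos k with h | h
  · subst h; simp
  · obtain ⟨m, rfl⟩ := Nat.exists_eq_add_of_le (Nat.one_le_iff_ne_zero.mpr (Nat.pos_iff_ne_zero.mp h))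
    simp only [Nat.add_comm 1 m]
    have h1 : m + 1 ≠ 0 := Nat.succ_ne_zero m
    have h2 : (m + 1 < p + 1) ↔ (m < p) := Nat.succ_lt_succ_iff
    have h3 : (m + 1 = p + 1) ↔ (m = p) := Nat.succ_inj
    simp only [h1, if_false, h2, h3, Nat.add_sub_cancel]
    by_cases hm : m < p
    · simp [hm]
    · by_cases hmp : m = p
      · simp [hm, hmp]
      · have : 1 ≤ m := by omega
        simp [hm, hmp, Nat.sub_add_cancel this]

/-- value count below `n` -/
def cnt (n : ℕ) (s : ℕ → α) (v : α) : ℕ := ∑ k ∈ range n, ind (s k) v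

/-- number of adjacent disagreements among the first `n` entries -/
def cuts (n : ℕ) (s : ℕ → α) : ℕ := ∑ k ∈ range (n-1), cut (s k) (s (k+1))

lemma cnt_congr {n : ℕ} {s s' : ℕ → α} (v : α) (h : ∀ k < n, s k = s' k) :
    cnt n s v = cnt n s' v := by
  unfold cnt
  exact Finset.sum_congr rfl (fun k hk => by rw [h k (mem_range.mp hk)])

lemma cnt_congr_iff {β : Type*} [DecidableEq β] {n : ℕ} {s : ℕ → α} {s' : ℕ → β} {v : α} {v' : β}
    (h : ∀ k < n, (s k = v ↔ s' k = v')) : cnt n s v = cnt n s' v' := by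
  unfold cnt ind
  exact Finset.sum_congr rfl (fun k hk => by
    by_cases hs : s k = v
    · rw [if_pos hs, if_pos ((h k (mem_range.mp hk)).mp hs)]
    · rw [if_neg hs, if_neg (fun hc => hs ((h k (mem_range.mp hk)).mpr hc))])

lemma cuts_congr {n : ℕ} {s s' : ℕ → α} (h : ∀ k < n, s k = s' k) :
    cuts n s = cuts n s' := by
  unfold cuts
  refine Finset.sum_congr rfl (fun k hk => ?_)
  have hk' := mem_range.mp hk
  rw [h k (by omega), h (k+1) (by omega)]

lemma cnt_succ (n : ℕ) (s : ℕ → α) (v : α) :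
    cnt (n+1) s v = ind (s 0) v + cnt n (tail s) v := by
  unfold cnt
  rw [Finset.sum_range_succ' (fun k => ind (s k) v) n]
  simp [tail, Nat.add_comm]

lemma cnt_zero_of (n : ℕ) (s : ℕ → α) (v : α) (h : ∀ k < n, s k ≠ v) :
    cnt n s v = 0 := by
  unfold cnt
  refine Finset.sum_eq_zero (fun k hk => ?_)
  unfold ind
  rw [if_neg (h k (mem_range.mp hk))]

lemma cuts_succ (n : ℕ) (s : ℕ → α) :
    cuts (n+2) s = cut (s 0) (s 1) + cuts (n+1) (tail s) := by
  unfold cuts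
  simp only [show n+2-1 = n+1 from rfl, show n+1-1 = n from rfl]
  rw [Finset.sum_range_succ' (fun k => cut (s k) (s (k+1))) n]
  simp only [tail]
  rw [Nat.add_comm]

lemma cnt_cons (n : ℕ) (a : α) (s : ℕ → α) (v : α) :
    cnt (n+1) (cons a s) v = ind a v + cnt n s v := by
  rw [cnt_succ]
  congr 1

lemma cuts_cons (n : ℕ) (a : α) (s : ℕ → α) :
    cuts (n+2) (cons a s) = cut a (s 0) + cuts (n+1) s := by
  rw [cuts_succ]
  congr 1

lemma cnt_ins {p n : ℕ} (hp : p ≤ n) (j : α) (s : ℕ → α) (v : α) :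
    cnt (n+1) (ins p j s) v = cnt n s v + ind j v := by
  induction p generalizing n s with
  | zero =>
    rw [ins_zero, cnt_cons]; ring
  | succ p ih =>
    obtain ⟨m, rfl⟩ : ∃ m, n = m + 1 := ⟨n - 1, by omega⟩
    rw [ins_succ, cnt_cons, ih (by omega), cnt_succ]
    ring

lemma cuts_ins_zero (n : ℕ) (j : α) (s : ℕ → α) :
    cuts (n+2) (ins 0 j s) = cut j (s 0) + cuts (n+1) s := by
  rw [ins_zero, cuts_cons]

lemma cuts_ins_last (m : ℕ) (j : α) (s : ℕ → α) :
    cuts (m+2) (ins (m+1) j s) = cuts (m+1) s + cut (s m) j := by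
  induction m generalizing s with
  | zero =>
    unfold cuts
    simp only [show 0+2-1 = 1 from rfl, show 0+1-1 = 0 from rfl,
      Finset.sum_range_one, Finset.sum_range_zero]
    have h0 : ins 1 j s 0 = s 0 := by simp [ins]
    have h1 : ins 1 j s 1 = j := by simp [ins]
    rw [h0, h1]
    omega
  | succ m ih =>
    rw [ins_succ, cuts_cons]
    have h0 : ins (m+1) j (tail s) 0 = tail s 0 := by simp [ins]
    rw [h0, ih (tail s), cuts_succ]
    simp only [tail_apply]
    ring

lemma cuts_ins_mid {q n : ℕ} (h : q + 2 ≤ n) (j : α) (s : ℕ → α) :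
    cuts (n+1) (ins (q+1) j s) + cut (s q) (s (q+1))
      = cuts n s + cut (s q) j + cut j (s (q+1)) := by
  induction q generalizing n s with
  | zero =>
    obtain ⟨m, rfl⟩ : ∃ m, n = m + 2 := ⟨n - 2, by omega⟩
    rw [ins_succ, ins_zero]
    rw [show m + 2 + 1 = (m+1) + 2 by ring, cuts_cons]
    have : cuts (m+1+1) (cons j (tail s)) = cut j (tail s 0) + cuts (m+1) (tail s) := by
      rw [show m+1+1 = m+2 by ring, cuts_cons]
    rw [this, cuts_succ]
    simp only [cons_zero, tail_apply]
    ring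
  | succ q ih =>
    obtain ⟨m, rfl⟩ : ∃ m, n = m + 3 := ⟨n - 3, by omega⟩
    rw [ins_succ]
    have e1 : cuts (m+3+1) (cons (s 0) (ins (q+1) j (tail s)))
        = cut (s 0) (ins (q+1) j (tail s) 0) + cuts (m+3) (ins (q+1) j (tail s)) :=
      cuts_cons (m+2) _ _
    rw [e1]
    have h0 : ins (q+1) j (tail s) 0 = tail s 0 := by simp [ins]
    rw [h0]
    have e2 := ih (n := m + 2) (by omega) (tail s)
    have e3 : cuts (m+3) s = cut (s 0) (s 1) + cuts (m+2) (tail s) := cuts_succ (m+1) s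
    simp only [tail_apply, show m+2+1 = m+3 from rfl, show (0:ℕ)+1 = 1 from rfl,
      show q+1+1 = q+2 from rfl] at e2 e3 h0 ⊢
    omega



def fExt {β : Type*} (n : ℕ) (f : Fin n → β) (d : β) : ℕ → β :=
  fun k => if h : k < n then f ⟨k, h⟩ else d

lemma fExt_lt {β : Type*} {n : ℕ} (f : Fin n → β) (d : β) {k : ℕ} (h : k < n) :
    fExt n f d k = f ⟨k, h⟩ := dif_pos h

lemma fExt_coe {β : Type*} {n : ℕ} (f : Fin n → β) (d : β) (m : Fin n) :
    fExt n f d ↑m = f m := by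
  rw [fExt_lt f d m.isLt, Fin.eta]

lemma filter_card_eq_cnt {n : ℕ} (Pred : Fin n → Prop) [DecidablePred Pred] (s : ℕ → α) (v : α)
    (h : ∀ (k : ℕ) (hk : k < n), Pred ⟨k, hk⟩ ↔ s k = v) :
    (Finset.univ.filter Pred).card = cnt n s v := by
  rw [Finset.card_filter]
  have : cnt n s v = ∑ i : Fin n, ind (s ↑i) v := by
    unfold cnt
    exact (Fin.sum_univ_eq_sum_range (fun k => ind (s k) v) n).symm
  rw [this]
  refine Finset.sum_congr rfl (fun i _ => ?_)
  unfold ind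
  by_cases hp : Pred i
  · rw [if_pos hp, if_pos]
    have := (h ↑i i.isLt).mp (by rwa [Fin.eta])
    exact this
  · rw [if_neg hp, if_neg]
    intro hc
    exact hp (by have := (h ↑i i.isLt).mpr hc; rwa [Fin.eta] at this)

lemma cutsOf_eq_cuts {n : ℕ} (P : Fin n → Fin 2) (d : Fin 2) :
    cutsOf P = cuts n (fExt n P d) := by
  classical
  set s := fExt n P d with hs
  set F : ℕ → ℕ := fun k => if k + 1 < n then cut (s k) (s (k+1)) else 0 with hF
  have step1 : cutsOf P = ∑ i : Fin n, F ↑i := by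
    unfold cutsOf
    rw [Finset.card_filter, Fintype.sum_prod_type]
    refine Finset.sum_congr rfl (fun p1 _ => ?_)
    by_cases h : (p1 : ℕ) + 1 < n
    · have hq : F ↑p1 = cut (s ↑p1) (s (↑p1+1)) := if_pos h
      rw [hq]
      set q : Fin n := ⟨(p1:ℕ)+1, h⟩ with hqdef
      rw [Finset.sum_eq_single q]
      · have h1 : s ↑p1 = P p1 := by rw [hs, fExt_coe]
        have h2 : s ((p1:ℕ)+1) = P q := by rw [hs, fExt_lt P d h]
        rw [h1, h2]
        unfold cut
        by_cases hne : P p1 = P q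
        · rw [if_pos hne,
            if_neg (show ¬((p1:ℕ)+1 = (q:ℕ) ∧ P p1 ≠ P q) from fun hc => hc.2 hne)]
        · rw [if_neg hne, if_pos ⟨rfl, hne⟩]
      · intro b _ hb
        rw [if_neg]
        rintro ⟨hb1, -⟩
        exact hb (Fin.ext hb1.symm)
      · intro hq'; exact absurd (Finset.mem_univ q) hq'
    · have hq : F ↑p1 = 0 := if_neg h
      rw [hq]
      refine Finset.sum_eq_zero (fun p2 _ => ?_)
      rw [if_neg]
      rintro ⟨hb1, -⟩
      exact h (hb1 ▸ p2.isLt)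
  have step2 : ∑ i : Fin n, F ↑i = ∑ k ∈ range n, F k :=
    Fin.sum_univ_eq_sum_range F n
  have step3 : ∑ k ∈ range n, F k = cuts n s := by
    unfold cuts
    rcases n with _ | m
    · simp
    · rw [Finset.sum_range_succ, show m + 1 - 1 = m from rfl]
      have : F m = 0 := if_neg (by omega)
      rw [this, add_zero]
      refine Finset.sum_congr rfl (fun k hk => ?_)
      have hk' := mem_range.mp hk
      exact if_pos (by omega)
  rw [step1, step2, step3]

lemma mem_neck_iff (t : ℕ) (f : Fin (2*t) → Fin t) (d : Fin t) :
    f ∈ neck t ↔ ∀ i, cnt (2*t) (fExt (2*t) f d) i = 2 := by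
  unfold neck
  rw [Finset.mem_filter]
  simp only [Finset.mem_univ, true_and]
  refine forall_congr' (fun i => ?_)
  rw [filter_card_eq_cnt (fun p => f p = i) (fExt (2*t) f d) i
    (fun k hk => by rw [fExt_lt f d hk])]

lemma fair2_iff (t : ℕ) (f : Fin (2*t) → Fin t) (P : Fin (2*t) → Fin 2)
    (d1 : Fin 2) (d2 : Fin t) :
    Fair2 t f P ↔ ∀ (j : Fin 2) (i : Fin t),
      cnt (2*t) (fun k => (fExt (2*t) P d1 k, fExt (2*t) f d2 k)) (j, i) = 1 := by
  unfold Fair2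
  refine forall_congr' (fun j => forall_congr' (fun i => ?_))
  rw [filter_card_eq_cnt (fun p => P p = j ∧ f p = i)
    (fun k => (fExt (2*t) P d1 k, fExt (2*t) f d2 k)) (j, i)
    (fun k hk => by
      rw [fExt_lt P d1 hk, fExt_lt f d2 hk, Prod.mk.injEq])]

def flip2 : Fin 2 → Fin 2 := fun x => if x = 0 then 1 else 0

lemma flip2_ne : ∀ x : Fin 2, flip2 x ≠ x := by decide
lemma eq_flip2_of_ne : ∀ x y : Fin 2, y ≠ x → y = flip2 x := by decide
lemma flip2_flip2 : ∀ x : Fin 2, flip2 (flip2 x) = x := by decide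
lemma cut_flip2 : ∀ a b : Fin 2, cut a (flip2 b) = ind a b := by decide
lemma ind_comm' : ∀ a b : Fin 2, ind a b = ind b a := by decide
lemma cut_self (a : α) : cut a a = 0 := if_pos rfl
lemma ind_self (a : α) : ind a a = 1 := if_pos rfl
lemma cut_sum_of_ne : ∀ a b j : Fin 2, a ≠ b → cut a j + cut j b = 1 := by decide
lemma cut_eq_of_fin2 : ∀ x y j : Fin 2,
    cut x y = (if x ≠ j ∧ y = j then 1 else 0) + (if x = j ∧ y ≠ j then 1 else 0) := by decide

omit [DecidableEq α] in
lemma ins_pair {β : Type*} (p : ℕ) (a : α) (b : β) (s : ℕ → α) (u : ℕ → β) :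
    (fun k => (ins p a s k, ins p b u k)) = ins p (a, b) (fun k => (s k, u k)) := by
  funext k
  unfold ins
  split_ifs <;> rfl



def sfun (t : ℕ) (c : Fin (t+1)) (f : Fin (2*t) → Fin t) : ℕ → Fin (t+1) :=
  fun k => if h : k < 2*t then c.succAbove (f ⟨k, h⟩) else c

def gfun (t : ℕ) (c : Fin (t+1)) (p : ℕ) (f : Fin (2*t) → Fin t) : ℕ → Fin (t+1) :=
  ins (2*t+1) c (ins p c (sfun t c f))

def Phi (t : ℕ) (c : Fin (t+1)) (p : Fin (2*t+1)) (f : Fin (2*t) → Fin t) :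
    Fin (2*(t+1)) → Fin (t+1) := fun k => gfun t c ↑p f ↑k

variable {t : ℕ} {c : Fin (t+1)} {p : ℕ} {f : Fin (2*t) → Fin t}

lemma gfun_last : gfun t c p f (2*t+1) = c := by
  simp [gfun, ins]

lemma gfun_lt (hk : p ≤ 2*t) {k : ℕ} (h : k ≤ 2*t) :
    gfun t c p f k = ins p c (sfun t c f) k := by
  unfold gfun ins
  rw [if_pos (by omega)]

lemma gfun_p (hp : p ≤ 2*t) : gfun t c p f p = c := by
  rw [gfun_lt hp hp]
  simp [ins]

lemma gfun_emb (hp : p ≤ 2*t) (m : Fin (2*t)) :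
    gfun t c p f (if (m:ℕ) < p then (m:ℕ) else (m:ℕ)+1) = c.succAbove (f m) := by
  have hm := m.isLt
  by_cases h : (m:ℕ) < p
  · rw [if_pos h, gfun_lt hp (by omega)]
    unfold ins
    rw [if_pos h]
    unfold sfun
    rw [dif_pos hm, Fin.eta]
  · rw [if_neg h, gfun_lt hp (by omega)]
    unfold ins
    rw [if_neg (by omega), if_neg (by omega)]
    unfold sfun
    simp only [Nat.add_sub_cancel]
    rw [dif_pos hm, Fin.eta]

lemma gfun_ne_c (hp : p ≤ 2*t) {k : ℕ} (hk : k < 2*t+2) (h1 : k ≠ p) (h2 : k ≠ 2*t+1) :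
    gfun t c p f k ≠ c := by
  rw [gfun_lt hp (by omega)]
  unfold ins sfun
  by_cases h : k < p
  · rw [if_pos h, dif_pos (by omega)]
    exact Fin.succAbove_ne c _
  · rw [if_neg h, if_neg h1, dif_pos (by omega)]
    exact Fin.succAbove_ne c _

lemma cnt_gfun (hp : p ≤ 2*t) (v : Fin (t+1)) :
    cnt (2*t+2) (gfun t c p f) v = cnt (2*t) (sfun t c f) v + ind c v + ind c v := by
  unfold gfun
  rw [cnt_ins (le_refl (2*t+1)) c _ v, cnt_ins hp c _ v]

lemma cnt_sfun_c : cnt (2*t) (sfun t c f) c = 0 :=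
  cnt_zero_of _ _ _ (fun k hk => by
    unfold sfun; rw [dif_pos hk]; exact Fin.succAbove_ne c _)

lemma cnt_sfun_sa (d : Fin t) (i0 : Fin t) :
    cnt (2*t) (sfun t c f) (c.succAbove i0) = cnt (2*t) (fExt (2*t) f d) i0 := by
  refine @cnt_congr_iff (Fin (t+1)) _ (Fin t) _ (2*t) (sfun t c f) (fExt (2*t) f d)
    (c.succAbove i0) i0 (fun k hk => ?_)
  unfold sfun fExt
  rw [dif_pos hk, dif_pos hk, Fin.succAbove_right_inj]

lemma ind_self' (a : α) : ind a a = 1 := if_pos rfl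

lemma fExt_coe' {β : Type*} {n : ℕ} (f : Fin n → β) (d : β) (m : Fin n) :
    fExt n f d ↑m = f m := by
  unfold fExt
  rw [dif_pos m.isLt, Fin.eta]

lemma Phi_mem_iff (hp : p ≤ 2*t) (ht : 1 ≤ t) (pp : Fin (2*t+1)) (hpp : (pp : ℕ) = p) :
    Phi t c pp f ∈ neck (t+1) ↔ f ∈ neck t := by
  have hd : (0:ℕ) < t := ht
  have d : Fin t := ⟨0, hd⟩
  have key : ∀ v, cnt (2*(t+1)) (fExt (2*(t+1)) (Phi t c pp f) c) v
      = cnt (2*t+2) (gfun t c p f) v := by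
    intro v
    refine cnt_congr v (fun k hk => ?_)
    unfold fExt Phi
    rw [dif_pos (show k < 2*(t+1) from hk)]
    simp only [hpp]
  rw [mem_neck_iff (t+1) (Phi t c pp f) c, mem_neck_iff t f d]
  constructor
  · intro h i0
    have := h (c.succAbove i0)
    rw [key, cnt_gfun hp, cnt_sfun_sa d i0] at this
    have hne : ind c (c.succAbove i0) = 0 := by
      unfold ind
      rw [if_neg (fun hc => Fin.succAbove_ne c i0 hc.symm)]
    omega
  · intro h v
    rw [key, cnt_gfun hp]
    by_cases hv : v = c
    · subst hv
      rw [cnt_sfun_c, ind_self']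
    · obtain ⟨i0, rfl⟩ := Fin.exists_succAbove_eq hv
      rw [cnt_sfun_sa d i0, h i0]
      have hne : ind c (c.succAbove i0) = 0 := by
        unfold ind
        rw [if_neg (fun hc => Fin.succAbove_ne c i0 hc.symm)]
      omega

lemma Phi_inj (ht : 1 ≤ t) {c c' : Fin (t+1)} {pp pp' : Fin (2*t+1)}
    {f f' : Fin (2*t) → Fin t} (h : Phi t c pp f = Phi t c' pp' f') :
    c = c' ∧ pp = pp' ∧ f = f' := by
  have hp : (pp:ℕ) ≤ 2*t := by omega
  have hp' : (pp':ℕ) ≤ 2*t := by omega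
  have hcc : c = c' := by
    have := congrFun h ⟨2*t+1, by omega⟩
    unfold Phi at this
    simpa [gfun_last] using this
  subst hcc
  have hpp : (pp:ℕ) = (pp':ℕ) := by
    by_contra hne
    have := congrFun h ⟨(pp:ℕ), by omega⟩
    unfold Phi at this
    simp only [] at this
    rw [gfun_p hp] at this
    exact gfun_ne_c hp' (by omega) (fun hc => hne hc) (by omega) this.symm
  have hppf : pp = pp' := Fin.ext hpp
  subst hppf
  refine ⟨rfl, rfl, funext (fun m => ?_)⟩
  have hm := m.isLt
  have hidx : (if (m:ℕ) < (pp:ℕ) then (m:ℕ) else (m:ℕ)+1) < 2*(t+1) := by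
    split <;> omega
  have := congrFun h ⟨_, hidx⟩
  unfold Phi at this
  simp only [] at this
  rw [gfun_emb hp m, gfun_emb hp m] at this
  exact (Fin.succAbove_right_inj).mp this

lemma cnt_eq_card_filter (n : ℕ) (s : ℕ → α) (v : α) :
    cnt n s v = ((range n).filter (fun k => s k = v)).card := by
  rw [Finset.card_filter]
  unfold cnt ind
  rfl

lemma Phi_surj (ht : 1 ≤ t) (g : Fin (2*(t+1)) → Fin (t+1)) (hg : g ∈ neck (t+1)) :
    ∃ (c : Fin (t+1)) (pp : Fin (2*t+1)) (f : Fin (2*t) → Fin t),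
      f ∈ neck t ∧ Phi t c pp f = g := by
  set c : Fin (t+1) := g ⟨2*t+1, by omega⟩ with hc
  have hcnt : cnt (2*(t+1)) (fExt (2*(t+1)) g c) c = 2 :=
    (mem_neck_iff (t+1) g c).mp hg c
  set S : Finset ℕ := (range (2*(t+1))).filter (fun k => fExt (2*(t+1)) g c k = c) with hS
  have hScard : S.card = 2 := by rw [hS, ← cnt_eq_card_filter, hcnt]
  have hmemS : ∀ k (hk : k < 2*t+2), (k ∈ S ↔ g ⟨k, hk⟩ = c) := by
    intro k hk
    rw [hS, Finset.mem_filter, Finset.mem_range]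
    unfold fExt
    rw [dif_pos (show k < 2*(t+1) from hk)]
    exact ⟨fun h => h.2, fun h => ⟨hk, h⟩⟩
  have hlastS : (2*t+1) ∈ S := (hmemS (2*t+1) (by omega)).mpr rfl
  obtain ⟨x, y, hxy, hSxy⟩ := Finset.card_eq_two.mp hScard
  -- find the other element p0
  have hex : ∃ p0, p0 ∈ S ∧ p0 ≠ 2*t+1 ∧ ∀ k, k ∈ S ↔ (k = p0 ∨ k = 2*t+1) := by
    rw [hSxy] at hlastS ⊢
    simp only [Finset.mem_insert, Finset.mem_singleton] at hlastS ⊢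
    rcases hlastS with h1 | h1
    · exact ⟨y, Or.inr rfl, by omega, fun k => by constructor <;> (intro hh; omega)⟩
    · exact ⟨x, Or.inl rfl, by omega, fun k => by constructor <;> (intro hh; omega)⟩
  obtain ⟨p0, hp0S, hp0ne, hSiff⟩ := hex
  have hp0lt : p0 < 2*t+2 := by
    have := hSiff p0
    have hm : p0 ∈ S := hp0S
    rw [hS, Finset.mem_filter, Finset.mem_range] at hm
    omega
  have hp0le : p0 ≤ 2*t := by omega
  -- the embedded index for m
  have hembI : ∀ m : Fin (2*t), (if (m:ℕ) < p0 then (m:ℕ) else (m:ℕ)+1) < 2*(t+1) := by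
    intro m; have := m.isLt; split <;> omega
  have hne : ∀ m : Fin (2*t), g ⟨_, hembI m⟩ ≠ c := by
    intro m hcon
    have hmem := (hmemS _ (hembI m)).mpr hcon
    rw [hSiff] at hmem
    have := m.isLt
    rcases hmem with hh | hh <;> revert hh <;> split <;> omega
  set f : Fin (2*t) → Fin t :=
    fun m => Classical.choose (Fin.exists_succAbove_eq (hne m)) with hf
  have hfspec : ∀ m, c.succAbove (f m) = g ⟨_, hembI m⟩ :=
    fun m => Classical.choose_spec (Fin.exists_succAbove_eq (hne m))
  have hPhi : Phi t c ⟨p0, by omega⟩ f = g := by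
    funext k
    have hk := k.isLt
    by_cases h1 : (k:ℕ) = 2*t+1
    · unfold Phi
      simp only []
      rw [h1, gfun_last, hc]
      congr 1
      exact (Fin.ext h1).symm
    · by_cases h2 : (k:ℕ) = p0
      · unfold Phi
        simp only []
        rw [h2, gfun_p hp0le]
        have : g ⟨p0, by omega⟩ = c := (hmemS p0 (by omega)).mp hp0S
        rw [← this]
        congr 1
        exact (Fin.ext h2).symm
      · have hk2 : (k:ℕ) < 2*t+2 := hk
        set m0 : ℕ := if (k:ℕ) < p0 then (k:ℕ) else (k:ℕ) - 1 with hm0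
        have hm0lt : m0 < 2*t := by rw [hm0]; split <;> omega
        set m : Fin (2*t) := ⟨m0, hm0lt⟩ with hm
        have hidx : (if (m:ℕ) < p0 then (m:ℕ) else (m:ℕ)+1) = (k:ℕ) := by
          simp only [hm, hm0]
          by_cases hcase : (k:ℕ) < p0
          · rw [if_pos hcase, if_pos hcase]
          · rw [if_neg hcase, if_neg (by omega)]
            omega
        unfold Phi
        simp only []
        have hg1 := gfun_emb (c := c) (f := f) hp0le m
        rw [hidx] at hg1
        rw [hg1, hfspec m]
        congr 1
        apply Fin.ext
        simp only [hidx]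
  exact ⟨c, ⟨p0, by omega⟩, f,
    (Phi_mem_iff hp0le ht ⟨p0, by omega⟩ rfl).mp (by rw [hPhi]; exact hg), hPhi⟩



lemma aux_ind_split1 : ∀ x y j : Fin 2, ind y j
    = (if x = j ∧ y = j then 1 else 0) + (if ¬(x = j) ∧ y = j then 1 else 0) := by decide
lemma aux_ind_split2 : ∀ x y j : Fin 2, ind x j
    = (if x = j ∧ y = j then 1 else 0) + (if x = j ∧ ¬(y = j) then 1 else 0) := by decide
lemma aux_cut_split : ∀ x y j : Fin 2, cut x y
    = (if ¬(x = j) ∧ y = j then 1 else 0) + (if x = j ∧ ¬(y = j) then 1 else 0) := by decide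
lemma costF_interior_eq : ∀ x y j : Fin 2,
    (if x = y then ind x j else 0) = if x = j ∧ y = j then 1 else 0 := by decide
lemma ind_flip_sum : ∀ a j : Fin 2, ind a j + ind (flip2 a) j = 1 := by decide
lemma ind_le_one : ∀ a j : Fin 2, ind a j ≤ 1 := by decide
lemma ind_self2 (a : α) : ind a a = 1 := if_pos rfl

/-- the extra-cut cost of inserting the new pair when the mate goes to slot `k`. -/
def costF (n : ℕ) (s : ℕ → Fin 2) : ℕ → ℕ := fun k =>
  if k = 0 then ind (s 0) (s (n-1)) else if k = n then 1
  else if s (k-1) = s k then ind (s (k-1)) (s (n-1)) else 0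

lemma costSum (m : ℕ) (s : ℕ → Fin 2) :
    2 * (∑ k ∈ range (m+3), costF (m+2) s k) + cuts (m+2) s
      ≤ 2 * cnt (m+2) s (s (m+1)) + 2 := by
  set jj := s (m+1) with hjj
  set A := ∑ q ∈ range (m+1), (if s q = jj ∧ s (q+1) = jj then 1 else 0) with hA
  set D := ∑ q ∈ range (m+1), (if ¬(s q = jj) ∧ s (q+1) = jj then 1 else 0) with hD
  set U := ∑ q ∈ range (m+1), (if s q = jj ∧ ¬(s (q+1) = jj) then 1 else 0) with hU
  have hcost : ∑ k ∈ range (m+3), costF (m+2) s k = A + ind (s 0) jj + 1 := by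
    rw [Finset.sum_range_succ' (fun k => costF (m+2) s k) (m+2)]
    have h0 : costF (m+2) s 0 = ind (s 0) jj := by unfold costF; rw [if_pos rfl]; rfl
    rw [h0, Finset.sum_range_succ]
    have hlast : costF (m+2) s (m+1+1) = 1 := by
      unfold costF
      rw [if_neg (by omega), if_pos rfl]
    rw [hlast]
    have hmid : ∑ q ∈ range (m+1), costF (m+2) s (q+1) = A := by
      rw [hA]
      refine Finset.sum_congr rfl (fun q hq => ?_)
      have hq' := mem_range.mp hq
      unfold costF
      rw [if_neg (by omega), if_neg (by omega)]
      simp only [Nat.add_sub_cancel]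
      exact costF_interior_eq (s q) (s (q+1)) jj
    rw [hmid]
    ring
  have hcnt1 : cnt (m+2) s jj = A + D + ind (s 0) jj := by
    unfold cnt
    rw [Finset.sum_range_succ' (fun k => ind (s k) jj) (m+1)]
    have : ∑ q ∈ range (m+1), ind (s (q+1)) jj = A + D := by
      rw [hA, hD, ← Finset.sum_add_distrib]
      exact Finset.sum_congr rfl (fun q _ => aux_ind_split1 (s q) (s (q+1)) jj)
    rw [this]
  have hcnt2 : cnt (m+2) s jj = A + U + 1 := by
    unfold cnt
    rw [Finset.sum_range_succ (fun k => ind (s k) jj) (m+1)]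
    have : ∑ q ∈ range (m+1), ind (s q) jj = A + U := by
      rw [hA, hU, ← Finset.sum_add_distrib]
      exact Finset.sum_congr rfl (fun q _ => aux_ind_split2 (s q) (s (q+1)) jj)
    rw [this, ← hjj, ind_self2]
  have hcuts : cuts (m+2) s = D + U := by
    unfold cuts
    simp only [show m+2-1 = m+1 from rfl]
    rw [hD, hU, ← Finset.sum_add_distrib]
    exact Finset.sum_congr rfl (fun q _ => aux_cut_split (s q) (s (q+1)) jj)
  have he := ind_le_one (s 0) jj
  omega

lemma exists_fair (t : ℕ) (f : Fin (2*t) → Fin t) (hf : f ∈ neck t) :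
    ∃ P, Fair2 t f P := by
  classical
  refine ⟨fun p => if ∃ q, q < p ∧ f q = f p then 1 else 0, fun j i => ?_⟩
  set P : Fin (2*t) → Fin 2 := fun p => if ∃ q, q < p ∧ f q = f p then 1 else 0 with hPdef
  show (univ.filter (fun p => P p = j ∧ f p = i)).card = 1
  have hcard : (univ.filter (fun p => f p = i)).card = 2 := by
    unfold neck at hf
    rw [mem_filter] at hf
    exact hf.2 i
  obtain ⟨u0, v0, huv0, hset0⟩ := Finset.card_eq_two.mp hcard
  have hne' : u0 ≠ v0 := huv0
  -- order them
  set u := if u0 < v0 then u0 else v0 with hu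
  set v := if u0 < v0 then v0 else u0 with hv
  have hlt : u < v := by
    rw [hu, hv]
    rcases lt_or_gt_of_ne hne' with h | h
    · rw [if_pos h, if_pos h]; exact h
    · rw [if_neg (not_lt_of_gt h), if_neg (not_lt_of_gt h)]; exact h
  have hset : univ.filter (fun p => f p = i) = {u, v} := by
    rw [hset0, hu, hv]
    by_cases h : u0 < v0
    · rw [if_pos h, if_pos h]
    · rw [if_neg h, if_neg h]
      exact Finset.pair_comm u0 v0
  have hfu : f u = i := by
    have : u ∈ univ.filter (fun p => f p = i) := by
      rw [hset]; exact Finset.mem_insert_self u {v}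
    exact (Finset.mem_filter.mp this).2
  have hfv : f v = i := by
    have : v ∈ univ.filter (fun p => f p = i) := by
      rw [hset]; exact Finset.mem_insert_of_mem (Finset.mem_singleton_self v)
    exact (Finset.mem_filter.mp this).2
  have hmem : ∀ p, f p = i ↔ (p = u ∨ p = v) := by
    intro p
    constructor
    · intro hp
      have : p ∈ univ.filter (fun p => f p = i) := Finset.mem_filter.mpr ⟨mem_univ p, hp⟩
      rw [hset] at this
      simpa using this
    · rintro (rfl | rfl) <;> assumption
  have hPu : P u = 0 := by
    rw [hPdef]
    simp only []
    rw [if_neg]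
    rintro ⟨q, hq1, hq2⟩
    rw [hfu] at hq2
    rcases (hmem q).mp hq2 with rfl | rfl
    · exact absurd hq1 (lt_irrefl _)
    · exact absurd (hq1.trans hlt) (lt_irrefl _)
  have hPv : P v = 1 := by
    rw [hPdef]
    simp only []
    rw [if_pos ⟨u, hlt, by rw [hfu, hfv]⟩]
  by_cases hj : j = 0
  case pos =>
    subst hj
    have : univ.filter (fun p => P p = 0 ∧ f p = i) = {u} := by
      ext p
      rw [Finset.mem_filter, Finset.mem_singleton]
      constructor
      · rintro ⟨-, hP0, hfp⟩
        rcases (hmem p).mp hfp with rfl | rfl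
        · rfl
        · rw [hPv] at hP0; exact absurd hP0 (by decide)
      · rintro rfl
        exact ⟨mem_univ u, hPu, hfu⟩
    rw [this, Finset.card_singleton]
  case neg =>
    have hj1 : j = 1 := by
      apply Fin.ext
      have h2 := j.isLt
      have h0 : (j:ℕ) ≠ 0 := fun hc => hj (Fin.ext hc)
      omega
    subst hj1
    have : univ.filter (fun p => P p = 1 ∧ f p = i) = {v} := by
      ext p
      rw [Finset.mem_filter, Finset.mem_singleton]
      constructor
      · rintro ⟨-, hP1, hfp⟩
        rcases (hmem p).mp hfp with rfl | rfl
        · rw [hPu] at hP1; exact absurd hP1 (by decide)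
        · rfl
      · rintro rfl
        exact ⟨mem_univ v, hPv, hfv⟩
    rw [this, Finset.card_singleton]

lemma pair_ind_sum {t : ℕ} (a : Fin 2) (b : Fin t) (j : Fin 2) :
    ∑ i : Fin t, ind ((a, b) : Fin 2 × Fin t) (j, i) = ind a j := by
  unfold ind
  by_cases h : a = j
  · subst h
    rw [if_pos rfl]
    have hpt : ∀ i : Fin t, ((if ((a,b) : Fin 2 × Fin t) = (a,i) then 1 else 0) : ℕ)
        = if b = i then 1 else 0 := by
      intro i
      by_cases hb : b = i
      · rw [if_pos (by rw [hb]), if_pos hb]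
      · rw [if_neg (fun hc => hb (congrArg Prod.snd hc)), if_neg hb]
    rw [Finset.sum_congr rfl (fun i _ => hpt i)]
    simp
  · rw [if_neg h]
    refine Finset.sum_eq_zero (fun i _ => ?_)
    rw [if_neg (fun hc => h (congrArg Prod.fst hc))]

lemma cnt_partition_eq (t : ℕ) (ht : 1 ≤ t) (f : Fin (2*t) → Fin t)
    (P : Fin (2*t) → Fin 2) (hP : Fair2 t f P) (j : Fin 2) :
    cnt (2*t) (fExt (2*t) P 0) j = t := by
  have d : Fin t := ⟨0, ht⟩
  have hfair := (fair2_iff t f P 0 d).mp hP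
  have step : cnt (2*t) (fExt (2*t) P 0) j
      = ∑ i : Fin t, cnt (2*t) (fun k => (fExt (2*t) P 0 k, fExt (2*t) f d k)) (j, i) := by
    unfold cnt
    rw [Finset.sum_comm]
    refine Finset.sum_congr rfl (fun k _ => ?_)
    exact (pair_ind_sum (fExt (2*t) P 0 k) (fExt (2*t) f d k) j).symm
  rw [step]
  rw [Finset.sum_congr rfl (fun i _ => hfair j i)]
  simp


-- ============ part 5 ============

lemma ind_pair_snd_ne {β γ : Type*} [DecidableEq β] [DecidableEq γ]
    {b y : γ} (a x : β) (h : b ≠ y) : ind ((a,b) : β × γ) (x,y) = 0 := by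
  unfold ind
  rw [if_neg (fun hc => h (congrArg Prod.snd hc))]

lemma ind_pair_snd_eq {β γ : Type*} [DecidableEq β] [DecidableEq γ]
    {b : γ} (a x : β) : ind ((a,b) : β × γ) (x,b) = ind a x := by
  unfold ind
  by_cases h : a = x
  · rw [if_pos (by rw [h]), if_pos h]
  · rw [if_neg (fun hc => h (congrArg Prod.fst hc)), if_neg h]

lemma fair_ext {t : ℕ} (ht : 1 ≤ t) {f : Fin (2*t) → Fin t} {P : Fin (2*t) → Fin 2}
    (hP : Fair2 t f P) (c : Fin (t+1)) (pp : Fin (2*t+1)) (j0 : Fin 2) :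
    Fair2 (t+1) (Phi t c pp f)
      (fun k : Fin (2*(t+1)) =>
        ins (2*t+1) (flip2 j0) (ins ↑pp j0 (fExt (2*t) P 0)) ↑k) := by
  have d : Fin t := ⟨0, ht⟩
  have hple : (pp:ℕ) ≤ 2*t := by omega
  set sP := fExt (2*t) P 0 with hsP
  set QN : ℕ → Fin 2 := ins (2*t+1) (flip2 j0) (ins ↑pp j0 sP) with hQN
  rw [fair2_iff (t+1) _ _ 0 c]
  intro j i
  have hcong : cnt (2*(t+1)) (fun k =>
        (fExt (2*(t+1)) (fun k : Fin (2*(t+1)) => QN ↑k) 0 k,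
         fExt (2*(t+1)) (Phi t c pp f) c k)) (j,i)
      = cnt (2*t+2) (fun k => (QN k, gfun t c ↑pp f k)) (j,i) := by
    refine cnt_congr _ (fun k hk => ?_)
    unfold fExt Phi
    rw [dif_pos (show k < 2*(t+1) from hk), dif_pos (show k < 2*(t+1) from hk)]
  rw [hcong]
  have e1 : (fun k => (QN k, gfun t c ↑pp f k))
      = ins (2*t+1) (flip2 j0, c)
          (fun k => (ins ↑pp j0 sP k, ins ↑pp c (sfun t c f) k)) := by
    rw [hQN]
    unfold gfun
    exact ins_pair (2*t+1) (flip2 j0) c _ _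
  have e2 : (fun k => (ins ↑pp j0 sP k, ins ↑pp c (sfun t c f) k))
      = ins ↑pp (j0, c) (fun k => (sP k, sfun t c f k)) :=
    ins_pair ↑pp j0 c _ _
  rw [e1, e2]
  rw [cnt_ins (le_refl (2*t+1)) _ _ _, cnt_ins (show (pp:ℕ) ≤ 2*t from hple) _ _ _]
  by_cases hi : i = c
  · rw [hi]
    have hz : cnt (2*t) (fun k => (sP k, sfun t c f k)) (j, c) = 0 := by
      refine cnt_zero_of _ _ _ (fun k hk => ?_)
      intro hc
      have h2 : sfun t c f k = c := congrArg Prod.snd hc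
      unfold sfun at h2
      rw [dif_pos hk] at h2
      exact Fin.succAbove_ne c _ h2
    rw [hz, ind_pair_snd_eq j0 j, ind_pair_snd_eq (flip2 j0) j]
    have := ind_flip_sum j0 j
    omega
  · obtain ⟨i0, rfl⟩ := Fin.exists_succAbove_eq hi
    have hzz : c ≠ c.succAbove i0 := fun hc => Fin.succAbove_ne c i0 hc.symm
    rw [ind_pair_snd_ne j0 j hzz, ind_pair_snd_ne (flip2 j0) j hzz]
    have hmain : cnt (2*t) (fun k => (sP k, sfun t c f k)) (j, c.succAbove i0)
        = cnt (2*t) (fun k => (sP k, fExt (2*t) f d k)) (j, i0) := by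
      refine cnt_congr_iff (fun k hk => ?_)
      show (sP k, sfun t c f k) = (j, c.succAbove i0)
        ↔ (sP k, fExt (2*t) f d k) = (j, i0)
      rw [Prod.mk.injEq, Prod.mk.injEq]
      unfold sfun fExt
      rw [dif_pos hk, dif_pos hk, Fin.succAbove_right_inj]
    rw [hmain, (fair2_iff t f P 0 d).mp hP j i0]


lemma cuts_ext {t : ℕ} (ht : 1 ≤ t) (P : Fin (2*t) → Fin 2) (pp : Fin (2*t+1)) :
    ∃ j0 : Fin 2,
      cuts (2*t+2) (ins (2*t+1) (flip2 j0) (ins ↑pp j0 (fExt (2*t) P 0)))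
        ≤ cuts (2*t) (fExt (2*t) P 0) + costF (2*t) (fExt (2*t) P 0) ↑pp := by
  obtain ⟨m, hm⟩ : ∃ m, 2*t = m+2 := ⟨2*t-2, by omega⟩
  set sP := fExt (2*t) P 0 with hsP
  set p := (pp : ℕ) with hp
  have hple : p ≤ 2*t := by omega
  by_cases hp0 : p = 0
  · -- left end
    refine ⟨sP 0, ?_⟩
    have h1 := cuts_ins_last (2*t) (flip2 (sP 0)) (ins p (sP 0) sP)
    have hinner : (ins p (sP 0) sP) (2*t) = sP (2*t-1) := by
      unfold ins
      rw [if_neg (by omega), if_neg (by omega)]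
    rw [hinner] at h1
    have h2 : cuts (2*t+1) (ins p (sP 0) sP) = cut (sP 0) (sP 0) + cuts (2*t) sP := by
      have := cuts_ins_zero (m+1) (sP 0) sP
      rw [show m+1+2 = 2*t+1 by omega, show m+1+1 = 2*t by omega] at this
      rw [hp0]
      exact this
    have h3 : costF (2*t) sP p = ind (sP 0) (sP (2*t-1)) := by
      unfold costF
      rw [if_pos hp0]
    have hend : cut (sP (2*t-1)) (flip2 (sP 0)) = ind (sP 0) (sP (2*t-1)) := by
      rw [cut_flip2, ind_comm']
    have hc0 : cut (sP 0) (sP 0) = 0 := cut_self _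
    omega
  · by_cases hpn : p = 2*t
    · -- right end
      refine ⟨sP (2*t-1), ?_⟩
      have h1 := cuts_ins_last (2*t) (flip2 (sP (2*t-1))) (ins p (sP (2*t-1)) sP)
      have hinner : (ins p (sP (2*t-1)) sP) (2*t) = sP (2*t-1) := by
        unfold ins
        rw [if_neg (by omega), if_pos hpn.symm]
      rw [hinner] at h1
      have h2 : cuts (2*t+1) (ins p (sP (2*t-1)) sP)
          = cuts (2*t) sP + cut (sP (2*t-1)) (sP (2*t-1)) := by
        have := cuts_ins_last (m+1) (sP (2*t-1)) sP
        rw [show m+1+2 = 2*t+1 by omega, show m+1+1 = 2*t by omega,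
          show m+1 = 2*t-1 by omega] at this
        rw [hpn]
        exact this
      have h3 : costF (2*t) sP p = 1 := by
        unfold costF
        rw [if_neg hp0, if_pos hpn]
      have hend : cut (sP (2*t-1)) (flip2 (sP (2*t-1))) = 1 := by
        rw [cut_flip2, ind_self2]
      have hc0 : cut (sP (2*t-1)) (sP (2*t-1)) = 0 := cut_self _
      omega
    · -- interior
      obtain ⟨q, hq⟩ : ∃ q, p = q+1 := ⟨p-1, by omega⟩
      have hq2 : q+2 ≤ 2*t := by omega
      by_cases heq : sP q = sP (q+1)
      · -- non-cut gap
        refine ⟨sP p, ?_⟩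
        have hq1p : sP q = sP p := by rw [hq]; exact heq
        have h1 := cuts_ins_last (2*t) (flip2 (sP p)) (ins p (sP p) sP)
        have hinner : (ins p (sP p) sP) (2*t) = sP (2*t-1) := by
          unfold ins
          rw [if_neg (by omega), if_neg (by omega)]
        rw [hinner] at h1
        have h2 := cuts_ins_mid hq2 (sP p) sP
        rw [← hq] at h2
        have h3 : costF (2*t) sP p = ind (sP q) (sP (2*t-1)) := by
          unfold costF
          rw [if_neg hp0, if_neg hpn, show p-1 = q by omega, if_pos hq1p]
        have hend : cut (sP (2*t-1)) (flip2 (sP p)) = ind (sP q) (sP (2*t-1)) := by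
          rw [cut_flip2, ← hq1p, ind_comm']
        have hcx : cut (sP q) (sP p) = 0 := by rw [hq1p]; exact cut_self _
        have hcy : cut (sP p) (sP p) = 0 := cut_self _
        omega
      · -- cut gap
        refine ⟨flip2 (sP (2*t-1)), ?_⟩
        have h1 := cuts_ins_last (2*t) (flip2 (flip2 (sP (2*t-1))))
          (ins p (flip2 (sP (2*t-1))) sP)
        have hinner : (ins p (flip2 (sP (2*t-1))) sP) (2*t) = sP (2*t-1) := by
          unfold ins
          rw [if_neg (by omega), if_neg (by omega)]
        rw [hinner] at h1
        have h2 := cuts_ins_mid hq2 (flip2 (sP (2*t-1))) sP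
        rw [← hq] at h2
        have hsum := cut_sum_of_ne (sP q) (sP (q+1)) (flip2 (sP (2*t-1))) heq
        rw [← hq] at hsum
        have hqp : ¬ sP q = sP p := by rw [hq]; exact heq
        have hCC : cut (sP q) (sP p) = 1 := by unfold cut; rw [if_neg hqp]
        have hend : cut (sP (2*t-1)) (flip2 (flip2 (sP (2*t-1)))) = 0 := by
          rw [flip2_flip2]
          exact cut_self _
        have h3 : costF (2*t) sP p = 0 := by
          unfold costF
          rw [if_neg hp0, if_neg hpn, show p-1 = q by omega, if_neg hqp]
        omega

lemma key_triple {t : ℕ} (ht : 1 ≤ t) (f : Fin (2*t) → Fin t)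
    (P : Fin (2*t) → Fin 2) (hP : Fair2 t f P)
    (c : Fin (t+1)) (pp : Fin (2*t+1)) :
    ∃ Q : Fin (2*(t+1)) → Fin 2, Fair2 (t+1) (Phi t c pp f) Q ∧
      cutsOf Q ≤ cutsOf P + costF (2*t) (fExt (2*t) P 0) ↑pp := by
  obtain ⟨j0, hj0⟩ := cuts_ext ht P pp
  set QN : ℕ → Fin 2 := ins (2*t+1) (flip2 j0) (ins ↑pp j0 (fExt (2*t) P 0)) with hQN
  refine ⟨fun k : Fin (2*(t+1)) => QN ↑k, fair_ext ht hP c pp j0, ?_⟩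
  have hA : cutsOf (fun k : Fin (2*(t+1)) => QN ↑k) = cuts (2*t+2) QN := by
    rw [cutsOf_eq_cuts _ 0]
    refine cuts_congr (fun k hk => ?_)
    unfold fExt
    rw [dif_pos (show k < 2*(t+1) from hk)]
  have hB : cutsOf P = cuts (2*t) (fExt (2*t) P 0) := cutsOf_eq_cuts P 0
  rw [hA, hB]
  exact hj0

-- ============ part 6 ============

lemma exists_opt (t : ℕ) (f : Fin (2*t) → Fin t) (hf : f ∈ neck t) :
    ∃ P, Fair2 t f P ∧ cutsOf P = X2t1 t f := by
  obtain ⟨P0, hP0⟩ := exists_fair t f hf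
  have hne : {n : ℕ | ∃ P : Fin (2*t) → Fin 2, Fair2 t f P ∧ cutsOf P = n}.Nonempty :=
    ⟨cutsOf P0, P0, hP0, rfl⟩
  exact Nat.sInf_mem hne

lemma per_cf {t : ℕ} (ht : 1 ≤ t) (c : Fin (t+1)) (f : Fin (2*t) → Fin t)
    (hf : f ∈ neck t) :
    2 * (∑ pp : Fin (2*t+1), X2t1 (t+1) (Phi t c pp f)) + X2t1 t f
      ≤ 2*((2*t+1) * X2t1 t f) + (2*t+2) := by
  obtain ⟨P, hP, hPopt⟩ := exists_opt t f hf
  set sP := fExt (2*t) P 0 with hsP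
  have hbound : ∀ pp : Fin (2*t+1),
      X2t1 (t+1) (Phi t c pp f) ≤ cutsOf P + costF (2*t) sP ↑pp := by
    intro pp
    obtain ⟨Q, hQf, hQc⟩ := key_triple ht f P hP c pp
    exact le_trans (Nat.sInf_le ⟨Q, hQf, rfl⟩) hQc
  have hsum : ∑ pp : Fin (2*t+1), X2t1 (t+1) (Phi t c pp f)
      ≤ (2*t+1) * X2t1 t f + ∑ k ∈ range (2*t+1), costF (2*t) sP k := by
    calc ∑ pp : Fin (2*t+1), X2t1 (t+1) (Phi t c pp f)
        ≤ ∑ pp : Fin (2*t+1), (cutsOf P + costF (2*t) sP ↑pp) :=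
          Finset.sum_le_sum (fun pp _ => hbound pp)
      _ = (2*t+1) * cutsOf P + ∑ pp : Fin (2*t+1), costF (2*t) sP ↑pp := by
          rw [Finset.sum_add_distrib, Finset.sum_const, Finset.card_univ,
            Fintype.card_fin, smul_eq_mul]
      _ = (2*t+1) * X2t1 t f + ∑ k ∈ range (2*t+1), costF (2*t) sP k := by
          rw [hPopt, Fin.sum_univ_eq_sum_range (fun k => costF (2*t) sP k) (2*t+1)]
  obtain ⟨m, hm⟩ : ∃ m, 2*t = m+2 := ⟨2*t-2, by omega⟩
  have hcs := costSum m sP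
  rw [show m+3 = 2*t+1 by omega, show m+2 = 2*t by omega,
    show m+1 = 2*t-1 by omega] at hcs
  have hB : cnt (2*t) sP (sP (2*t-1)) = t := cnt_partition_eq t ht f P hP _
  have hXc : cuts (2*t) sP = cutsOf P := (cutsOf_eq_cuts P 0).symm
  rw [hB, hXc, hPopt] at hcs
  obtain ⟨u, hu⟩ : ∃ u, (2*t+1) * X2t1 t f = u := ⟨_, rfl⟩
  rw [hu] at hsum ⊢
  omega

lemma card_and_sum {t : ℕ} (ht : 1 ≤ t) :
    (neck (t+1)).card = (t+1) * ((2*t+1) * (neck t).card) ∧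
    ∑ g ∈ neck (t+1), X2t1 (t+1) g
      = ∑ c : Fin (t+1), ∑ f ∈ neck t, ∑ pp : Fin (2*t+1), X2t1 (t+1) (Phi t c pp f) := by
  classical
  set F : Fin (t+1) × Fin (2*t+1) × (Fin (2*t) → Fin t) → (Fin (2*(t+1)) → Fin (t+1)) :=
    fun x => Phi t x.1 x.2.1 x.2.2 with hF
  set Dom : Finset (Fin (t+1) × Fin (2*t+1) × (Fin (2*t) → Fin t)) :=
    (univ : Finset (Fin (t+1))) ×ˢ ((univ : Finset (Fin (2*t+1))) ×ˢ neck t) with hDom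
  have hinj : ∀ x ∈ Dom, ∀ y ∈ Dom, F x = F y → x = y := by
    intro x _ y _ hxy
    obtain ⟨h1, h2, h3⟩ := Phi_inj ht hxy
    exact Prod.ext h1 (Prod.ext h2 h3)
  have himg : Dom.image F = neck (t+1) := by
    apply Finset.ext
    intro g
    rw [Finset.mem_image]
    constructor
    · rintro ⟨x, hx, rfl⟩
      rw [hDom, Finset.mem_product, Finset.mem_product] at hx
      exact (Phi_mem_iff (by omega) ht x.2.1 rfl).mpr hx.2.2
    · intro hg
      obtain ⟨c, pp, f, hfmem, hPhi⟩ := Phi_surj ht g hg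
      refine ⟨(c, pp, f), ?_, hPhi⟩
      rw [hDom, Finset.mem_product, Finset.mem_product]
      exact ⟨Finset.mem_univ _, Finset.mem_univ _, hfmem⟩
  constructor
  · rw [← himg, Finset.card_image_of_injOn hinj, hDom,
      Finset.card_product, Finset.card_product, Finset.card_univ, Finset.card_univ,
      Fintype.card_fin, Fintype.card_fin]
  · rw [← himg, Finset.sum_image hinj, hDom]
    rw [Finset.sum_product]
    refine Finset.sum_congr rfl (fun c _ => ?_)
    rw [Finset.sum_product]
    exact Finset.sum_comm

lemma global_sum {t : ℕ} (ht : 1 ≤ t) :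
    2 * (∑ g ∈ neck (t+1), X2t1 (t+1) g) + (t+1) * (∑ f ∈ neck t, X2t1 t f)
      ≤ (t+1) * (2*((2*t+1) * (∑ f ∈ neck t, X2t1 t f)) + (neck t).card * (2*t+2)) := by
  obtain ⟨hcard, hsum⟩ := card_and_sum ht
  rw [hsum]
  have hc : ∀ c : Fin (t+1),
      2 * (∑ f ∈ neck t, ∑ pp : Fin (2*t+1), X2t1 (t+1) (Phi t c pp f))
        + (∑ f ∈ neck t, X2t1 t f)
      ≤ 2*((2*t+1) * (∑ f ∈ neck t, X2t1 t f)) + (neck t).card * (2*t+2) := by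
    intro c
    have h1 : ∑ f ∈ neck t,
        (2 * (∑ pp : Fin (2*t+1), X2t1 (t+1) (Phi t c pp f)) + X2t1 t f)
        ≤ ∑ f ∈ neck t, (2*((2*t+1) * X2t1 t f) + (2*t+2)) :=
      Finset.sum_le_sum (fun f hf => per_cf ht c f hf)
    rw [Finset.sum_add_distrib, Finset.sum_add_distrib, ← Finset.mul_sum,
      ← Finset.mul_sum, ← Finset.mul_sum, Finset.sum_const, smul_eq_mul] at h1
    exact h1
  have h2 : ∑ c : Fin (t+1),
      (2 * (∑ f ∈ neck t, ∑ pp : Fin (2*t+1), X2t1 (t+1) (Phi t c pp f))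
        + (∑ f ∈ neck t, X2t1 t f))
      ≤ ∑ c : Fin (t+1),
        (2*((2*t+1) * (∑ f ∈ neck t, X2t1 t f)) + (neck t).card * (2*t+2)) :=
    Finset.sum_le_sum (fun c _ => hc c)
  rw [Finset.sum_add_distrib, ← Finset.mul_sum, Finset.sum_const, Finset.sum_const,
    Finset.card_univ, Fintype.card_fin, smul_eq_mul, smul_eq_mul] at h2
  exact h2

lemma neck_nonempty (t : ℕ) (ht : 1 ≤ t) : ∃ f, f ∈ neck t := by
  have d : Fin t := ⟨0, ht⟩
  set f0 : Fin (2*t) → Fin t := fun k => ⟨(k:ℕ)/2, by have := k.isLt; omega⟩ with hf0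
  refine ⟨f0, (mem_neck_iff t f0 d).mpr (fun i => ?_)⟩
  rw [cnt_eq_card_filter]
  have hfilter : (range (2*t)).filter (fun k => fExt (2*t) f0 d k = i)
      = {2*(i:ℕ), 2*(i:ℕ)+1} := by
    apply Finset.ext
    intro k
    rw [Finset.mem_filter, Finset.mem_range, Finset.mem_insert, Finset.mem_singleton]
    have hi := i.isLt
    constructor
    · rintro ⟨hk, hfk⟩
      unfold fExt at hfk
      rw [dif_pos hk] at hfk
      have : (k:ℕ)/2 = (i:ℕ) := by
        have := congrArg Fin.val hfk
        simpa [hf0] using this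
      omega
    · intro hk
      have hklt : k < 2*t := by omega
      refine ⟨hklt, ?_⟩
      unfold fExt
      rw [dif_pos hklt]
      apply Fin.ext
      show k/2 = (i:ℕ)
      omega
  rw [hfilter]
  rw [Finset.card_insert_of_notMem (by rw [Finset.mem_singleton]; omega),
    Finset.card_singleton]

end NeckAux


/-- The recursion `f(t+1) ≤ f(t) + 1/2 - f(t)/(2(2t+1)) + 1/(2t+2)`. -/
theorem stmt18 (t : ℕ) (ht : 1 ≤ t) :
    expX (t + 1) ≤ expX t + 1 / 2 - expX t / (2 * (2 * (t : ℝ) + 1))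
      + 1 / (2 * (t : ℝ) + 2) := by
  classical
  obtain ⟨hcard, -⟩ := NeckAux.card_and_sum (t := t) ht
  have hglobal := NeckAux.global_sum (t := t) ht
  obtain ⟨f0, hf0⟩ := NeckAux.neck_nonempty t ht
  have hNpos : 0 < (neck t).card := Finset.card_pos.mpr ⟨f0, hf0⟩
  have hgrR : ((2 * (∑ g ∈ neck (t+1), X2t1 (t+1) g)
        + (t+1) * (∑ f ∈ neck t, X2t1 t f) : ℕ) : ℝ)
      ≤ (((t+1) * (2*((2*t+1) * (∑ f ∈ neck t, X2t1 t f))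
        + (neck t).card * (2*t+2)) : ℕ) : ℝ) := Nat.cast_le.mpr hglobal
  push_cast at hgrR
  have hcardR : (((neck (t+1)).card : ℕ) : ℝ)
      = ((t:ℝ)+1)*((2*(t:ℝ)+1)*(((neck t).card : ℕ) : ℝ)) := by
    exact_mod_cast congrArg (fun n : ℕ => (n : ℝ)) hcard
  unfold expX
  rw [hcardR]
  set T : ℝ := (t:ℝ) with hTdef
  have hT0 : (0:ℝ) ≤ T := Nat.cast_nonneg t
  set Nr : ℝ := (((neck t).card : ℕ) : ℝ) with hNr
  have hNR : (0:ℝ) < Nr := by rw [hNr]; exact_mod_cast hNpos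
  set Sr : ℝ := ∑ f ∈ neck t, ((X2t1 t f : ℕ) : ℝ) with hSr
  set Sg : ℝ := ∑ g ∈ neck (t+1), ((X2t1 (t+1) g : ℕ) : ℝ) with hSgr
  set a : ℝ := Sr / Nr with ha
  have hD : (0:ℝ) < (T+1)*((2*T+1)*Nr) := by positivity
  have hE : (0:ℝ) < 2*(2*T+1) := by positivity
  have step1 : Sg / ((T+1)*((2*T+1)*Nr)) ≤ ((4*T+1)*a + (2*T+2))/(2*(2*T+1)) := by
    rw [div_le_div_iff₀ hD hE]
    have haNr : a * Nr = Sr := div_mul_cancel₀ Sr hNR.ne'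
    have hmul := mul_le_mul_of_nonneg_left hgrR (by positivity : (0:ℝ) ≤ 2*T+1)
    have hexp : ((4*T+1)*a + (2*T+2)) * ((T+1)*((2*T+1)*Nr))
        = ((4*T+1)*(a*Nr))*((T+1)*(2*T+1)) + (2*T+2)*((T+1)*((2*T+1)*Nr)) := by
      ring
    rw [hexp, haNr]
    nlinarith [hmul]
  have step2 : ((4*T+1)*a + (2*T+2))/(2*(2*T+1))
      ≤ a + 1/2 - a/(2*(2*T+1)) + 1/(2*T+2) := by
    have hdiff : (a + 1/2 - a/(2*(2*T+1)) + 1/(2*T+2))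
        - (((4*T+1)*a + (2*T+2))/(2*(2*T+1)))
        = 1/(2*T+2) - 1/(2*(2*T+1)) := by
      field_simp
      ring
    have hge : 1/(2*(2*T+1)) ≤ 1/(2*T+2) := by
      apply one_div_le_one_div_of_le (by positivity)
      nlinarith
    linarith
  exact le_trans step1 step2

end
end
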